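/- arXiv:1403.2165 — 4 statements merged into one kernel-verified Lean document; each statement's English description precedes it below -/
import Mathlib

section
/- For every n ≥ 1 and all natural numbers a, b, the number of permutations σ ∈ S_n with inv(σ) = a and rmin(σ) = b equals the number of permutations σ ∈ S_n with sor(σ) = a and cyc(σ) = b; that is, the pairs of statistics (inv, rmin) and (sor, cyc) have the same joint distribution over S_n. -/
open scoped Classical

namespace SortIdx

variable {n : ℕ}

noncomputable section

/-- The inversion number `inv σ := #{(i,j) : i < j ∧ σ i > σ j}`. -/
def inv (σ : Equiv.Perm (Fin n)) : ℕ :=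
  (Finset.univ.filter (fun p : Fin n × Fin n => p.1 < p.2 ∧ σ p.2 < σ p.1)).card

/-- The inversion set `Inv σ := {(i,j) : i < j ∧ σ i > σ j}`. -/
def InvSet (σ : Equiv.Perm (Fin n)) : Finset (Fin n × Fin n) :=
  Finset.univ.filter (fun p : Fin n × Fin n => p.1 < p.2 ∧ σ p.2 < σ p.1)

/-- Right-to-left minimum letters. -/
def RmilSet (σ : Equiv.Perm (Fin n)) : Finset (Fin n) :=
  (Finset.univ.filter (fun i => ∀ j, i < j → σ i < σ j)).image σ

/-- The number of right-to-left minima. -/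
def rmin (σ : Equiv.Perm (Fin n)) : ℕ := (RmilSet σ).card

/-- Right-to-left minimum places. -/
def RmipSet (σ : Equiv.Perm (Fin n)) : Finset (Fin n) :=
  Finset.univ.filter (fun i => ∀ j, i < j → σ i < σ j)

/-- Right-to-left maximum letters. -/
def RmalSet (σ : Equiv.Perm (Fin n)) : Finset (Fin n) :=
  (Finset.univ.filter (fun i => ∀ j, i < j → σ j < σ i)).image σ

/-- The number of right-to-left maxima. -/
def rmax (σ : Equiv.Perm (Fin n)) : ℕ := (RmalSet σ).card

/-- Left-to-right minimum letters. -/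
def LmilSet (σ : Equiv.Perm (Fin n)) : Finset (Fin n) :=
  (Finset.univ.filter (fun i => ∀ j, j < i → σ i < σ j)).image σ

/-- The number of left-to-right minima. -/
def lmin (σ : Equiv.Perm (Fin n)) : ℕ := (LmilSet σ).card

/-- Left-to-right minimum places. -/
def LmipSet (σ : Equiv.Perm (Fin n)) : Finset (Fin n) :=
  Finset.univ.filter (fun i => ∀ j, j < i → σ i < σ j)

/-- Left-to-right maximum letters. -/
def LmalSet (σ : Equiv.Perm (Fin n)) : Finset (Fin n) :=
  (Finset.univ.filter (fun i => ∀ j, j < i → σ j < σ i)).image σ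

/-- The number of left-to-right maxima. -/
def lmax (σ : Equiv.Perm (Fin n)) : ℕ := (LmalSet σ).card

/-- Left-to-right maximum places. -/
def LmapSet (σ : Equiv.Perm (Fin n)) : Finset (Fin n) :=
  Finset.univ.filter (fun i => ∀ j, j < i → σ j < σ i)

/-- `Cyc σ`: the set of smallest elements of the cycles of `σ`
(`i` is smallest in its cycle iff `i ≤ σ^k i` for all `k`). -/
def CycSet (σ : Equiv.Perm (Fin n)) : Finset (Fin n) :=
  Finset.univ.filter (fun i => ∀ k : ℕ, i ≤ (σ ^ k) i)

/-- The number of cycles of `σ` (fixed points included). -/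
def cyc (σ : Equiv.Perm (Fin n)) : ℕ := (CycSet σ).card

/-- One step of the sorting process computing the sorting index: repeatedly
put the largest not-yet-fixed letter `j` in its place by the transposition
`(i j)` where `i = σ⁻¹ j` is the place of the letter `j`, recording the
distance `j - i`.  This produces the unique factorization
`σ = (i₁ j₁)(i₂ j₂)⋯(i_k j_k)` with `j₁ < ⋯ < j_k`, `i_r < j_r`, and sums
the `j_r - i_r`.  The fuel `n` is always sufficient. -/
def sorAux : ℕ → Equiv.Perm (Fin n) → ℕ
  | 0, _ => 0
  | (fuel + 1), σ =>
    if h : σ.support.Nonempty then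
      (((σ.support.max' h : Fin n) : ℕ) - ((σ⁻¹ (σ.support.max' h) : Fin n) : ℕ)) +
        sorAux fuel (σ * Equiv.swap (σ⁻¹ (σ.support.max' h)) (σ.support.max' h))
    else 0

/-- The sorting index of Petersen. -/
def sor (σ : Equiv.Perm (Fin n)) : ℕ := sorAux n σ

theorem bcode_exists (σ : Equiv.Perm (Fin n)) (i : Fin n) :
    ∃ k : ℕ, 0 < k ∧ (σ⁻¹ ^ k) i ≤ i := by
  refine ⟨orderOf σ⁻¹, orderOf_pos σ⁻¹, ?_⟩
  rw [pow_orderOf_eq_one]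
  simp

/-- The `B`-code of `σ`: `Bcode σ i = σ^(-k) i` where `k ≥ 1` is minimal with
`σ^(-k) i ≤ i`. -/
def Bcode (σ : Equiv.Perm (Fin n)) (i : Fin n) : Fin n :=
  (σ⁻¹ ^ (Nat.find (bcode_exists σ i))) i

/-- The `B`-code as a sequence in `L_n` (1-indexed values: the entry at place
`i` is the 1-indexed name of the letter `Bcode σ i`). -/
def BcodeNat (σ : Equiv.Perm (Fin n)) : Fin n → ℕ :=
  fun i => ((Bcode σ i : Fin n) : ℕ) + 1

/-- The Lehmer code: `Leh σ i = #{j : j ≤ i ∧ σ j ≤ σ i}` (1-indexed values). -/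
def Leh (σ : Equiv.Perm (Fin n)) : Fin n → ℕ :=
  fun i => (Finset.univ.filter (fun j => j ≤ i ∧ σ j ≤ σ i)).card

/-- The `A`-code: `A σ := Leh σ⁻¹`. -/
def Acode (σ : Equiv.Perm (Fin n)) : Fin n → ℕ := Leh σ⁻¹

/-- `O(code) := {i : code i = 1}` (for `1`-indexed codes in `L_n`). -/
def Oset (code : Fin n → ℕ) : Finset (Fin n) :=
  Finset.univ.filter (fun i => code i = 1)

/-- `Lmic1 σ := O(B σ)`, the set of places where the `B`-code equals `1`,
equivalently the left-to-right minima of the shifted cycle containing `1`. -/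
def Lmic1Set (σ : Equiv.Perm (Fin n)) : Finset (Fin n) :=
  Oset (BcodeNat σ)

/-- `lmic1 σ := #{i : (B σ)_i = 1}`. -/
def lmic1 (σ : Equiv.Perm (Fin n)) : ℕ := (Lmic1Set σ).card

/-- The bijection `φ = B⁻¹ ∘ A` of Foata–Han. -/
def phi (σ : Equiv.Perm (Fin n)) : Equiv.Perm (Fin n) :=
  Function.invFun BcodeNat (Acode σ)

/-- The algorithm computing the induced set of a code: the list argument is
the list of places still to process (from the last to the first), `S` is the
set of letters still available.  At place `i` we pick the `(code i)`-th
smallest element `l` of `S` (1-indexed), put the pairs `(l, j)` for `j ∈ S`,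
`j > l` into the answer and remove `l` from `S`. -/
def inducedAux : List (Fin n) → Finset (Fin n) → (Fin n → ℕ) → Finset (Fin n × Fin n)
  | [], _, _ => ∅
  | (i :: is), S, code =>
      ((S.filter (fun j => (S.sort (· ≤ ·)).getD (code i - 1) i < j)).image
          (fun j => ((S.sort (· ≤ ·)).getD (code i - 1) i, j))) ∪
        inducedAux is (S.erase ((S.sort (· ≤ ·)).getD (code i - 1) i)) code

/-- The induced set `⟨code⟩` of a code in `L_n`. -/
def induced (code : Fin n → ℕ) : Finset (Fin n × Fin n) :=
  inducedAux (List.finRange n).reverse Finset.univ code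

/-- The sorting set `Sor σ := ⟨B σ⟩`. -/
def SorSet (σ : Equiv.Perm (Fin n)) : Finset (Fin n × Fin n) :=
  induced (BcodeNat σ)

/-- The descent set (as a set of places `i`, `0`-indexed, such that
`σ i > σ (i+1)`). -/
def DesSet (σ : Equiv.Perm (Fin n)) : Finset (Fin n) :=
  Finset.univ.filter (fun i => ∃ h : (i : ℕ) + 1 < n, σ ⟨(i : ℕ) + 1, h⟩ < σ i)

/-- The major index (descents being counted `1`-indexed). -/
def maj (σ : Equiv.Perm (Fin n)) : ℕ :=
  ∑ i ∈ DesSet σ, ((i : ℕ) + 1)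

/-- The charge `chg σ := ∑_{i ∈ Des σ⁻¹} (n - i)` (descents `1`-indexed). -/
def chg (σ : Equiv.Perm (Fin n)) : ℕ :=
  ∑ i ∈ DesSet σ⁻¹, (n - ((i : ℕ) + 1))

/-- The reverse-complement of `σ` : `τ i = n + 1 - σ (n + 1 - i)` (1-indexed). -/
def revcomp (σ : Equiv.Perm (Fin n)) : Equiv.Perm (Fin n) :=
  Fin.revPerm * σ * Fin.revPerm

/-- The reverse major index `rmaj σ := maj (revcomp σ)`. -/
def rmaj (σ : Equiv.Perm (Fin n)) : ℕ := maj (revcomp σ)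

end

end SortIdx

namespace PFproof

open Finset Equiv Equiv.Perm

variable {n : ℕ}

abbrev Code (n : ℕ) := ∀ i : Fin n, Fin (i.1 + 1)

lemma sc_step (σ : Equiv.Perm (Fin n)) (x y : Fin n) (h : σ x = y) : σ.SameCycle x y :=
  ⟨1, by simpa using h⟩

lemma pow_fix (τ : Equiv.Perm (Fin n)) {j : Fin n} (h : τ j = j) : ∀ k : ℕ, (τ ^ k) j = j := by
  intro k
  induction k with
  | zero => rfl
  | succ k ih => rw [pow_succ, Equiv.Perm.mul_apply, h, ih]

lemma sameCycle_of_pow (σ : Equiv.Perm (Fin n)) (x : Fin n) (k : ℕ) :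
    σ.SameCycle x ((σ ^ k) x) := ⟨k, by rw [zpow_natCast]⟩

lemma mem_cycSet (σ : Equiv.Perm (Fin n)) (x : Fin n) :
    x ∈ SortIdx.CycSet σ ↔ ∀ m, σ.SameCycle x m → x ≤ m := by
  simp only [SortIdx.CycSet, Finset.mem_filter, Finset.mem_univ, true_and]
  constructor
  · intro h m hm
    obtain ⟨k, -, hk⟩ := hm.exists_pow_eq'
    rw [← hk]; exact h k
  · intro h k; exact h _ (sameCycle_of_pow σ x k)

lemma swap_fix_j (σ : Equiv.Perm (Fin n)) (i j : Fin n) (hσ : σ i = j) :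
    (σ * Equiv.swap i j) j = j := by
  rw [Equiv.Perm.mul_apply, Equiv.swap_apply_right, hσ]

lemma sameCycle_fixed {τ : Equiv.Perm (Fin n)} {j x : Fin n} (h : τ j = j)
    (hs : τ.SameCycle x j) : x = j := by
  obtain ⟨k, -, hk⟩ := hs.exists_pow_eq'
  exact (τ ^ k).injective (hk.trans (pow_fix τ h k).symm)

lemma K1 (σ : Equiv.Perm (Fin n)) (i j : Fin n) (hσ : σ i = j) (x : Fin n) (hx : x ≠ j) (k : ℕ) :
    σ.SameCycle x (((σ * Equiv.swap i j) ^ k) x) := by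
  induction k with
  | zero => exact Equiv.Perm.SameCycle.refl σ x
  | succ k ih =>
    have hy : ((σ * Equiv.swap i j) ^ k) x ≠ j := by
      intro h
      exact hx (((σ * Equiv.swap i j) ^ k).injective
        (h.trans (pow_fix _ (swap_fix_j σ i j hσ) k).symm))
    rw [pow_succ', Equiv.Perm.mul_apply]
    have step : σ.SameCycle (((σ * Equiv.swap i j) ^ k) x)
        ((σ * Equiv.swap i j) (((σ * Equiv.swap i j) ^ k) x)) := by
      by_cases hyi : ((σ * Equiv.swap i j) ^ k) x = i
      · rw [hyi, Equiv.Perm.mul_apply, Equiv.swap_apply_left]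
        exact (sc_step σ i j hσ).trans (sc_step σ j _ rfl)
      · rw [Equiv.Perm.mul_apply, Equiv.swap_apply_of_ne_of_ne hyi hy]
        exact sc_step σ _ _ rfl
    exact ih.trans step

lemma K2 (σ : Equiv.Perm (Fin n)) (i j : Fin n) (hσ : σ i = j) (hij : i ≠ j) :
    ∀ k : ℕ, ∀ x : Fin n, x ≠ j → (σ ^ k) x ≠ j →
      (σ * Equiv.swap i j).SameCycle x ((σ ^ k) x) := by
  intro k
  induction k using Nat.strong_induction_on with
  | _ k ih =>
    match k with
    | 0 => exact fun x hx _ => Equiv.Perm.SameCycle.refl _ x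
    | (k+1) =>
      intro x hx hk1
      by_cases hy : (σ ^ k) x = j
      · cases k with
        | zero => simp at hy; exact absurd hy hx
        | succ k' =>
          have hi : (σ ^ k') x = i := by
            have h1 : σ ((σ ^ k') x) = j := by
              rw [← Equiv.Perm.mul_apply, ← pow_succ']; exact hy
            exact σ.injective (h1.trans hσ.symm)
          have h1 : (σ * Equiv.swap i j).SameCycle x i := by
            have := ih k' (by omega) x hx (by rw [hi]; exact hij)
            rwa [hi] at this
          have h2 : (σ ^ (k' + 1 + 1)) x = (σ * Equiv.swap i j) i := by
            rw [pow_succ', Equiv.Perm.mul_apply, hy, Equiv.Perm.mul_apply,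
              Equiv.swap_apply_left]
          rw [h2]
          exact h1.trans (sc_step _ _ _ rfl)
      · have h1 : (σ * Equiv.swap i j).SameCycle x ((σ ^ k) x) :=
          ih k (by omega) x hx hy
        have hyi : (σ ^ k) x ≠ i := by
          intro h
          exact hk1 (by rw [pow_succ', Equiv.Perm.mul_apply, h, hσ])
        have h2 : (σ ^ (k + 1)) x = (σ * Equiv.swap i j) ((σ ^ k) x) := by
          rw [pow_succ', Equiv.Perm.mul_apply, Equiv.Perm.mul_apply,
            Equiv.swap_apply_of_ne_of_ne hyi hy]
        rw [h2]
        exact h1.trans (sc_step _ _ _ rfl)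

lemma sameCycle_iff (σ : Equiv.Perm (Fin n)) (i j : Fin n) (hσ : σ i = j) (hij : i ≠ j)
    {x m : Fin n} (hx : x ≠ j) (hm : m ≠ j) :
    σ.SameCycle x m ↔ (σ * Equiv.swap i j).SameCycle x m := by
  constructor
  · intro h
    obtain ⟨k, -, hk⟩ := h.exists_pow_eq'
    rw [← hk]
    exact K2 σ i j hσ hij k x hx (by rw [hk]; exact hm)
  · intro h
    obtain ⟨k, -, hk⟩ := h.exists_pow_eq'
    rw [← hk]
    exact K1 σ i j hσ x hx k

lemma j_not_mem_cycSet (σ : Equiv.Perm (Fin n)) (i j : Fin n) (hσ : σ i = j) (hij : i < j) :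
    j ∉ SortIdx.CycSet σ := by
  rw [mem_cycSet]
  push_neg
  exact ⟨i, (sc_step σ i j hσ).symm, hij⟩

lemma cycSet_swap (σ : Equiv.Perm (Fin n)) (i j : Fin n) (hσ : σ i = j) (hij : i < j) :
    SortIdx.CycSet (σ * Equiv.swap i j) = insert j (SortIdx.CycSet σ) := by
  have hne : i ≠ j := ne_of_lt hij
  have hji : σ.SameCycle j i := (sc_step σ i j hσ).symm
  have hjn : j ∉ SortIdx.CycSet σ := j_not_mem_cycSet σ i j hσ hij
  ext x
  rw [Finset.mem_insert, mem_cycSet, mem_cycSet]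
  constructor
  · intro h
    by_cases hx : x = j
    · left; exact hx
    · right
      intro m hsm
      by_cases hmj : m = j
      · have h1 : σ.SameCycle x i := (hmj ▸ hsm).trans hji
        have h2 : x ≤ i := h i ((sameCycle_iff σ i j hσ hne hx hne).mp h1)
        rw [hmj]
        exact le_trans h2 (le_of_lt hij)
      · exact h m ((sameCycle_iff σ i j hσ hne hx hmj).mp hsm)
  · rintro (hxj | h)
    · intro m hm
      have hm' : (σ * Equiv.swap i j).SameCycle j m := hxj ▸ hm
      have hmj : m = j := sameCycle_fixed (swap_fix_j σ i j hσ) hm'.symm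
      rw [hxj, hmj]
    · have hx : x ≠ j := by
        intro hxx
        exact hjn (by rw [mem_cycSet]; exact hxx ▸ h)
      intro m hm
      have hmj : m ≠ j := by
        intro hmm
        exact hx (sameCycle_fixed (swap_fix_j σ i j hσ) (hmm ▸ hm))
      exact h m ((sameCycle_iff σ i j hσ hne hx hmj).mpr hm)

lemma cyc_swap (σ : Equiv.Perm (Fin n)) (i j : Fin n) (hσ : σ i = j) (hij : i < j) :
    SortIdx.cyc (σ * Equiv.swap i j) = SortIdx.cyc σ + 1 := by
  unfold SortIdx.cyc
  rw [cycSet_swap σ i j hσ hij,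
    Finset.card_insert_of_notMem (j_not_mem_cycSet σ i j hσ hij)]

def dval (c : Code n) (j : Fin n) : Fin n :=
  ⟨j.1 - (c j).1, lt_of_le_of_lt (Nat.sub_le _ _) j.2⟩

noncomputable def LL (c : Code n) (m : ℕ) : Equiv.Perm (Fin n) :=
  (((List.finRange n).take m).map (fun j => Equiv.swap (dval c j) j)).prod

lemma LL_zero (c : Code n) : LL c 0 = 1 := by simp [LL]

lemma LL_succ (c : Code n) {m : ℕ} (hm : m < n) :
    LL c (m + 1) = LL c m * Equiv.swap (dval c ⟨m, hm⟩) ⟨m, hm⟩ := by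
  unfold LL
  rw [List.take_succ]
  have h : (List.finRange n)[m]? = some ⟨m, hm⟩ := by
    rw [List.getElem?_eq_getElem (by simpa using hm)]
    simp
  rw [h]
  simp

lemma LL_succ_ge (c : Code n) {m : ℕ} (hm : n ≤ m) : LL c (m + 1) = LL c m := by
  unfold LL
  rw [List.take_succ, List.getElem?_eq_none (by simpa using hm)]
  simp

lemma LL_fix (c : Code n) : ∀ m : ℕ, ∀ x : Fin n, m ≤ x.1 → LL c m x = x := by
  intro m
  induction m with
  | zero => intro x _; rw [LL_zero]; rfl
  | succ m ih =>
    intro x hx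
    have hm : m < n := by have := x.2; omega
    rw [LL_succ c hm, Equiv.Perm.mul_apply]
    have h1 : Equiv.swap (dval c ⟨m, hm⟩) ⟨m, hm⟩ x = x := by
      apply Equiv.swap_apply_of_ne_of_ne
      · intro h
        have h2 : x.1 = m - (c ⟨m, hm⟩).1 := congrArg Fin.val h
        omega
      · intro h
        have h2 : x.1 = m := congrArg Fin.val h
        omega
    rw [h1]
    exact ih x (by omega)

lemma LL_inv_fix (c : Code n) (m : ℕ) (x : Fin n) (h : m ≤ x.1) : (LL c m)⁻¹ x = x :=
  (Equiv.Perm.inv_eq_iff_eq).mpr (LL_fix c m x h).symm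

lemma LL_succ_inv (c : Code n) {m : ℕ} (hm : m < n) :
    (LL c (m + 1))⁻¹ ⟨m, hm⟩ = dval c ⟨m, hm⟩ := by
  rw [LL_succ c hm, mul_inv_rev, Equiv.Perm.mul_apply, LL_inv_fix c m _ (le_refl m)]
  rw [Equiv.swap_inv]
  exact Equiv.swap_apply_right _ _

lemma LL_apply_lt (c : Code n) {m : ℕ} (x : Fin n) (hx : x.1 < m) : (LL c m x).1 < m := by
  by_contra hcon
  push_neg at hcon
  have h2 : LL c m (LL c m x) = LL c m x := LL_fix c m _ hcon
  have h3 : LL c m x = x := (LL c m).injective h2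
  rw [h3] at hcon
  omega

lemma LL_succ_zero (c : Code n) {m : ℕ} (hm : m < n) (h0 : (c ⟨m, hm⟩).1 = 0) :
    LL c (m + 1) = LL c m := by
  have hdd : dval c ⟨m, hm⟩ = ⟨m, hm⟩ := by
    apply Fin.ext
    simp [dval, h0]
  rw [LL_succ c hm, hdd, Equiv.swap_self]
  simp
  rfl

lemma dval_lt (c : Code n) {m : ℕ} (hm : m < n) (h0 : (c ⟨m, hm⟩).1 ≠ 0) :
    (dval c ⟨m, hm⟩).1 < m := by
  have h2 := (c ⟨m, hm⟩).2
  have hd1 : ((dval c ⟨m, hm⟩ : Fin n) : ℕ) = m - (c ⟨m, hm⟩).1 := rfl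
  have hd2 : ((⟨m, hm⟩ : Fin n) : ℕ) = m := rfl
  omega

lemma LL_mem_support (c : Code n) {m : ℕ} (hm : m < n) (h0 : (c ⟨m, hm⟩).1 ≠ 0) :
    (⟨m, hm⟩ : Fin n) ∈ (LL c (m + 1)).support := by
  rw [Equiv.Perm.mem_support, LL_succ c hm, Equiv.Perm.mul_apply, Equiv.swap_apply_right]
  intro h
  have h1 := congrArg Fin.val h
  have h2 := LL_apply_lt c (dval c ⟨m, hm⟩) (dval_lt c hm h0)
  simp only at h1
  omega

lemma LL_max' (c : Code n) {m : ℕ} (hm : m < n) (h0 : (c ⟨m, hm⟩).1 ≠ 0)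
    (hne : (LL c (m + 1)).support.Nonempty) :
    (LL c (m + 1)).support.max' hne = ⟨m, hm⟩ := by
  apply le_antisymm
  · apply Finset.max'_le
    intro y hy
    rw [Equiv.Perm.mem_support] at hy
    by_contra hcon
    push_neg at hcon
    have hyv : m + 1 ≤ y.1 := by
      have h5 := (Fin.lt_def).mp hcon
      rw [Fin.val_mk] at h5
      omega
    exact hy (LL_fix c (m + 1) y hyv)
  · exact Finset.le_max' _ _ (LL_mem_support c hm h0)

lemma LL_back (c : Code n) {m : ℕ} (hm : m < n) :
    LL c (m + 1) * Equiv.swap (dval c ⟨m, hm⟩) ⟨m, hm⟩ = LL c m := by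
  rw [LL_succ c hm, mul_assoc, Equiv.swap_mul_self, mul_one]

lemma sorAux_one : ∀ fuel : ℕ, SortIdx.sorAux fuel (1 : Equiv.Perm (Fin n)) = 0
  | 0 => rfl
  | (f + 1) => by
    rw [SortIdx.sorAux]
    rw [dif_neg]
    simp [Equiv.Perm.support_one]

def Zsum (c : Code n) (m : ℕ) : ℕ :=
  ∑ j ∈ Finset.univ.filter (fun j : Fin n => j.1 < m), (c j).1

def Zcnt (c : Code n) (m : ℕ) : ℕ :=
  (Finset.univ.filter (fun j : Fin n => j.1 < m ∧ (c j).1 = 0)).card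

lemma Zsum_zero (c : Code n) : Zsum c 0 = 0 := by
  simp [Zsum]

lemma Zcnt_zero (c : Code n) : Zcnt c 0 = 0 := by
  simp [Zcnt]

lemma filter_lt_succ {m : ℕ} (hm : m < n) :
    Finset.univ.filter (fun j : Fin n => j.1 < m + 1) =
      insert ⟨m, hm⟩ (Finset.univ.filter (fun j : Fin n => j.1 < m)) := by
  ext x
  simp only [Finset.mem_filter, Finset.mem_univ, true_and, Finset.mem_insert, Fin.ext_iff]
  omega

lemma Zsum_succ (c : Code n) {m : ℕ} (hm : m < n) :
    Zsum c (m + 1) = Zsum c m + (c ⟨m, hm⟩).1 := by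
  unfold Zsum
  rw [filter_lt_succ hm, Finset.sum_insert (by simp)]
  exact Nat.add_comm _ _

lemma Zcnt_succ (c : Code n) {m : ℕ} (hm : m < n) :
    Zcnt c (m + 1) = Zcnt c m + (if (c ⟨m, hm⟩).1 = 0 then 1 else 0) := by
  unfold Zcnt
  by_cases h0 : (c ⟨m, hm⟩).1 = 0
  · rw [if_pos h0]
    have hset : Finset.univ.filter (fun j : Fin n => j.1 < m + 1 ∧ (c j).1 = 0) =
        insert ⟨m, hm⟩ (Finset.univ.filter (fun j : Fin n => j.1 < m ∧ (c j).1 = 0)) := by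
      ext x
      simp only [Finset.mem_filter, Finset.mem_univ, true_and, Finset.mem_insert]
      constructor
      · rintro ⟨h1, h2⟩
        rcases Nat.lt_succ_iff_lt_or_eq.mp h1 with h | h
        · right; exact ⟨h, h2⟩
        · left; exact Fin.ext h
      · rintro (rfl | ⟨h1, h2⟩)
        · exact ⟨Nat.lt_succ_self m, h0⟩
        · exact ⟨by omega, h2⟩
    rw [hset, Finset.card_insert_of_notMem (by simp)]
  · rw [if_neg h0]
    have hset2 : Finset.univ.filter (fun j : Fin n => j.1 < m + 1 ∧ (c j).1 = 0) =
        Finset.univ.filter (fun j : Fin n => j.1 < m ∧ (c j).1 = 0) := by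
      ext x
      simp only [Finset.mem_filter, Finset.mem_univ, true_and]
      constructor
      · rintro ⟨h1, h2⟩
        refine ⟨?_, h2⟩
        rcases Nat.lt_succ_iff_lt_or_eq.mp h1 with h | h
        · exact h
        · have hx : x = ⟨m, hm⟩ := Fin.ext h
          rw [hx] at h2
          exact absurd h2 h0
      · rintro ⟨h1, h2⟩
        exact ⟨by omega, h2⟩
    rw [hset2]
    omega

lemma sorAux_LL (c : Code n) : ∀ m : ℕ, m ≤ n → ∀ fuel : ℕ, m ≤ fuel →
    SortIdx.sorAux fuel (LL c m) = Zsum c m := by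
  intro m
  induction m with
  | zero => intro _ fuel _; rw [LL_zero, sorAux_one, Zsum_zero]
  | succ m ih =>
    intro hmn fuel hf
    have hm : m < n := hmn
    obtain ⟨f, rfl⟩ : ∃ f, fuel = f + 1 := ⟨fuel - 1, by omega⟩
    by_cases h0 : (c ⟨m, hm⟩).1 = 0
    · rw [LL_succ_zero c hm h0, ih (by omega) (f + 1) (by omega), Zsum_succ c hm, h0]
      omega
    · have hne : (LL c (m + 1)).support.Nonempty := ⟨_, LL_mem_support c hm h0⟩
      rw [SortIdx.sorAux, dif_pos hne, LL_max' c hm h0 hne, LL_succ_inv c hm,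
        LL_back c hm, ih (by omega) f (by omega), Zsum_succ c hm]
      have h2 := (c ⟨m, hm⟩).2
      have hd1 : ((dval c ⟨m, hm⟩ : Fin n) : ℕ) = m - (c ⟨m, hm⟩).1 := rfl
      have hd2 : ((⟨m, hm⟩ : Fin n) : ℕ) = m := rfl
      omega

lemma cyc_one : SortIdx.cyc (1 : Equiv.Perm (Fin n)) = n := by
  unfold SortIdx.cyc SortIdx.CycSet
  rw [Finset.filter_true_of_mem (fun i _ => fun k => by simp)]
  simp

lemma cyc_LL (c : Code n) : ∀ m : ℕ, m ≤ n →
    SortIdx.cyc (LL c m) = (n - m) + Zcnt c m := by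
  intro m
  induction m with
  | zero => intro _; rw [LL_zero, cyc_one, Zcnt_zero]; omega
  | succ m ih =>
    intro hmn
    have hm : m < n := hmn
    by_cases h0 : (c ⟨m, hm⟩).1 = 0
    · rw [LL_succ_zero c hm h0, ih (by omega), Zcnt_succ c hm, if_pos h0]
      omega
    · have hσ : LL c (m + 1) (dval c ⟨m, hm⟩) = ⟨m, hm⟩ := by
        rw [LL_succ c hm, Equiv.Perm.mul_apply, Equiv.swap_apply_left]
        exact LL_fix c m _ (le_refl m)
      have hij : dval c ⟨m, hm⟩ < (⟨m, hm⟩ : Fin n) := (Fin.lt_def).mpr (dval_lt c hm h0)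
      have key := cyc_swap (LL c (m + 1)) _ _ hσ hij
      rw [LL_back c hm] at key
      have hih := ih (by omega)
      rw [Zcnt_succ c hm, if_neg h0]
      omega

lemma LL_inj_aux : ∀ m : ℕ, ∀ c c' : Code n, LL c m = LL c' m →
    ∀ j : Fin n, j.1 < m → c j = c' j := by
  intro m
  induction m with
  | zero => intro c c' _ j hj; exact absurd hj (Nat.not_lt_zero _)
  | succ m ih =>
    intro c c' h j hj
    by_cases hm : m < n
    · have hdeq : dval c ⟨m, hm⟩ = dval c' ⟨m, hm⟩ := by
        rw [← LL_succ_inv c hm, ← LL_succ_inv c' hm, h]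
      have hceq : c ⟨m, hm⟩ = c' ⟨m, hm⟩ := by
        have h1 := congrArg Fin.val hdeq
        have h2 := (c ⟨m, hm⟩).2
        have h3 := (c' ⟨m, hm⟩).2
        have hd1 : ((dval c ⟨m, hm⟩ : Fin n) : ℕ) = m - (c ⟨m, hm⟩).1 := rfl
        have hd1' : ((dval c' ⟨m, hm⟩ : Fin n) : ℕ) = m - (c' ⟨m, hm⟩).1 := rfl
        have hd2 : ((⟨m, hm⟩ : Fin n) : ℕ) = m := rfl
        apply Fin.ext
        omega
      have hLm : LL c m = LL c' m := by
        rw [← LL_back c hm, ← LL_back c' hm, h, hdeq]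
      rcases Nat.lt_succ_iff_lt_or_eq.mp hj with h' | h'
      · exact ih c c' hLm j h'
      · have hje : j = ⟨m, hm⟩ := Fin.ext h'
        rw [hje]
        exact hceq
    · have hLm : LL c m = LL c' m := by
        rw [← LL_succ_ge c (le_of_not_gt hm), ← LL_succ_ge c' (le_of_not_gt hm), h]
      exact ih c c' hLm j (by have := j.2; omega)

lemma prod_range_id_succ : ∀ N : ℕ, ∏ i ∈ Finset.range N, (i + 1) = N.factorial := by
  intro N
  induction N with
  | zero => simp
  | succ N ih => rw [Finset.prod_range_succ, ih, Nat.factorial_succ, Nat.mul_comm]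

lemma card_code : Fintype.card (Code n) = n.factorial := by
  rw [Fintype.card_pi]
  have h1 : ∀ i : Fin n, Fintype.card (Fin (i.1 + 1)) = i.1 + 1 := fun i => Fintype.card_fin _
  rw [Finset.prod_congr rfl (fun i _ => h1 i)]
  rw [Fin.prod_univ_eq_prod_range (fun i => i + 1) n]
  exact prod_range_id_succ n

lemma decB_bij : Function.Bijective (fun c : Code n => LL c n) := by
  rw [Fintype.bijective_iff_injective_and_card]
  constructor
  · intro c c' h
    funext j
    exact LL_inj_aux n c c' h j j.2
  · rw [card_code, Fintype.card_perm, Fintype.card_fin]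

lemma sor_LL (c : Code n) : SortIdx.sor (LL c n) = Zsum c n :=
  sorAux_LL c n le_rfl n le_rfl

lemma cyc_LL_full (c : Code n) : SortIdx.cyc (LL c n) = Zcnt c n := by
  have := cyc_LL c n le_rfl
  simpa using this

def dnat (σ : Equiv.Perm (Fin n)) (i : Fin n) : ℕ :=
  (Finset.univ.filter (fun j => i < j ∧ σ j < σ i)).card

lemma dnat_lt (σ : Equiv.Perm (Fin n)) (i : Fin n) : dnat σ i < n - i.1 := by
  have hsub : (Finset.univ.filter (fun j => i < j ∧ σ j < σ i)) ⊆ Finset.Ioi i := by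
    intro j hj
    rw [Finset.mem_Ioi]
    exact (Finset.mem_filter.mp hj).2.1
  have h1 := Finset.card_le_card hsub
  rw [Fin.card_Ioi] at h1
  have h2 := i.2
  unfold dnat
  omega

lemma inv_eq (σ : Equiv.Perm (Fin n)) : SortIdx.inv σ = ∑ i, dnat σ i := by
  unfold SortIdx.inv
  rw [Finset.card_eq_sum_card_fiberwise (f := Prod.fst) (t := Finset.univ)
    (fun x _ => Finset.mem_univ _)]
  apply Finset.sum_congr rfl
  intro i _
  unfold dnat
  apply Finset.card_bij (fun p _ => p.2)
  · intro p hp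
    simp only [Finset.mem_filter, Finset.mem_univ, true_and] at hp ⊢
    obtain ⟨⟨h1, h2⟩, h3⟩ := hp
    rw [h3] at h1 h2
    exact ⟨h1, h2⟩
  · intro p hp q hq h
    simp only [Finset.mem_filter] at hp hq
    exact Prod.ext (hp.2.trans hq.2.symm) h
  · intro j hj
    simp only [Finset.mem_filter, Finset.mem_univ, true_and] at hj
    exact ⟨(i, j), by simp [hj], rfl⟩

lemma rmin_eq (σ : Equiv.Perm (Fin n)) :
    SortIdx.rmin σ = (Finset.univ.filter (fun i => dnat σ i = 0)).card := by
  unfold SortIdx.rmin SortIdx.RmilSet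
  rw [Finset.card_image_of_injective _ σ.injective]
  have hset : (Finset.univ.filter (fun i : Fin n => ∀ j, i < j → σ i < σ j)) =
      Finset.univ.filter (fun i => dnat σ i = 0) := by
    ext i
    simp only [Finset.mem_filter, Finset.mem_univ, true_and]
    unfold dnat
    rw [Finset.card_eq_zero, Finset.filter_eq_empty_iff]
    constructor
    · intro h x _ hpx
      exact absurd hpx.2 (not_lt.mpr (le_of_lt (h x hpx.1)))
    · intro h j hij
      have h2 := h (Finset.mem_univ j)
      have hle : σ i ≤ σ j := not_lt.mp (fun hl => h2 ⟨hij, hl⟩)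
      rcases lt_or_eq_of_le hle with h3 | h3
      · exact h3
      · exact absurd (σ.injective h3) (ne_of_lt hij)
  rw [hset]

lemma mem_avail (ρ : Equiv.Perm (Fin n)) (i : Fin n) :
    ρ i ∈ Finset.univ \ (Finset.univ.filter (fun j => j < i)).image ρ := by
  rw [Finset.mem_sdiff]
  refine ⟨Finset.mem_univ _, ?_⟩
  intro hmem
  obtain ⟨j, hj, hji⟩ := Finset.mem_image.mp hmem
  rw [Finset.mem_filter] at hj
  have hje : j = i := ρ.injective hji
  rw [hje] at hj
  exact absurd hj.2 (lt_irrefl i)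

lemma dnat_card (ρ : Equiv.Perm (Fin n)) (i : Fin n) :
    dnat ρ i = (((Finset.univ \ (Finset.univ.filter (fun j => j < i)).image ρ)).filter
      (fun v => v < ρ i)).card := by
  unfold dnat
  apply Finset.card_bij (fun j _ => ρ j)
  · intro j hj
    simp only [Finset.mem_filter, Finset.mem_univ, true_and] at hj
    rw [Finset.mem_filter, Finset.mem_sdiff]
    refine ⟨⟨Finset.mem_univ _, ?_⟩, hj.2⟩
    intro hmem
    obtain ⟨j', hj', hj'e⟩ := Finset.mem_image.mp hmem
    rw [Finset.mem_filter] at hj'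
    have hje : j' = j := ρ.injective hj'e
    rw [hje] at hj'
    exact absurd (lt_trans hj.1 hj'.2) (lt_irrefl i)
  · intro p hp q hq h
    exact ρ.injective h
  · intro v hv
    rw [Finset.mem_filter, Finset.mem_sdiff] at hv
    obtain ⟨⟨-, hnotmem⟩, hlt⟩ := hv
    refine ⟨ρ.symm v, ?_, ρ.apply_symm_apply v⟩
    simp only [Finset.mem_filter, Finset.mem_univ, true_and]
    have hva : ρ (ρ.symm v) = v := ρ.apply_symm_apply v
    constructor
    · rcases lt_trichotomy (ρ.symm v) i with h | h | h
      · exfalso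
        apply hnotmem
        apply Finset.mem_image.mpr
        refine ⟨ρ.symm v, ?_, hva⟩
        exact Finset.mem_filter.mpr ⟨Finset.mem_univ _, h⟩
      · exfalso
        rw [h] at hva
        exact (ne_of_lt hlt) hva.symm
      · exact h
    · rw [hva]
      exact hlt

lemma filter_lt_card_lt (S : Finset (Fin n)) {a b : Fin n} (ha : a ∈ S) (hab : a < b) :
    (S.filter (fun v => v < a)).card < (S.filter (fun v => v < b)).card := by
  apply Finset.card_lt_card
  rw [Finset.ssubset_iff_of_subset]
  · exact ⟨a, Finset.mem_filter.mpr ⟨ha, hab⟩,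
      fun hmem => absurd (Finset.mem_filter.mp hmem).2 (lt_irrefl a)⟩
  · intro v hv
    rw [Finset.mem_filter] at hv ⊢
    exact ⟨hv.1, lt_trans hv.2 hab⟩

lemma filter_lt_card_inj (S : Finset (Fin n)) {a b : Fin n} (ha : a ∈ S) (hb : b ∈ S)
    (h : (S.filter (fun v => v < a)).card = (S.filter (fun v => v < b)).card) : a = b := by
  rcases lt_trichotomy a b with hab | hab | hab
  · exact absurd h (Nat.ne_of_lt (filter_lt_card_lt S ha hab))
  · exact hab
  · exact absurd h.symm (Nat.ne_of_lt (filter_lt_card_lt S hb hab))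

lemma dnat_inj {σ τ : Equiv.Perm (Fin n)} (h : ∀ i, dnat σ i = dnat τ i) : σ = τ := by
  have key : ∀ m : ℕ, ∀ i : Fin n, i.1 < m → σ i = τ i := by
    intro m
    induction m with
    | zero => intro i hi; exact absurd hi (Nat.not_lt_zero _)
    | succ m ih =>
      intro i hi
      rcases Nat.lt_succ_iff_lt_or_eq.mp hi with h' | h'
      · exact ih i h'
      · have himg : (Finset.univ.filter (fun j => j < i)).image σ =
            (Finset.univ.filter (fun j => j < i)).image τ := by
          apply Finset.image_congr
          intro j hj
          have hj' : j < i := (Finset.mem_filter.mp (Finset.mem_coe.mp hj)).2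
          exact ih j (by have h5 := (Fin.lt_def).mp hj'; omega)
        have h2' : dnat τ i = ((Finset.univ \ (Finset.univ.filter
            (fun j => j < i)).image σ).filter (fun v => v < τ i)).card := by
          rw [dnat_card τ i, ← himg]
        have h1' : dnat σ i = ((Finset.univ \ (Finset.univ.filter
            (fun j => j < i)).image σ).filter (fun v => v < σ i)).card := dnat_card σ i
        refine filter_lt_card_inj (Finset.univ \ (Finset.univ.filter
            (fun j => j < i)).image σ) ?_ ?_ ?_
        · exact mem_avail σ i
        · rw [himg]
          exact mem_avail τ i
        · rw [← h1', h i, h2']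
  exact Equiv.ext (fun i => key n i i.2)

def acode2 (σ : Equiv.Perm (Fin n)) : Code n := fun i =>
  ⟨dnat σ i.rev, by
    have h1 := dnat_lt σ i.rev
    have h2 : (i.rev : ℕ) = n - (i.1 + 1) := Fin.val_rev i
    have h3 := i.2
    omega⟩

lemma acode2_bij : Function.Bijective (acode2 (n := n)) := by
  rw [Fintype.bijective_iff_injective_and_card]
  refine ⟨?_, by rw [card_code, Fintype.card_perm, Fintype.card_fin]⟩
  intro σ τ h
  apply dnat_inj
  intro i
  have h1 := congrFun h i.rev
  have h2 := congrArg Fin.val h1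
  show dnat σ i = dnat τ i
  have h3 : dnat σ i.rev.rev = dnat τ i.rev.rev := h2
  rwa [Fin.rev_rev] at h3

lemma inv_acode2 (σ : Equiv.Perm (Fin n)) : Zsum (acode2 σ) n = SortIdx.inv σ := by
  unfold Zsum
  rw [Finset.filter_true_of_mem (fun j _ => j.2), inv_eq σ]
  exact Fintype.sum_equiv Fin.revPerm _ _ (fun x => rfl)

lemma rmin_acode2 (σ : Equiv.Perm (Fin n)) : Zcnt (acode2 σ) n = SortIdx.rmin σ := by
  unfold Zcnt
  rw [rmin_eq σ]
  apply Finset.card_bij (fun i _ => Fin.rev i)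
  · intro i hi
    simp only [Finset.mem_filter, Finset.mem_univ, true_and] at hi ⊢
    exact hi.2
  · intro p hp q hq h
    have h2 := congrArg Fin.rev h
    rwa [Fin.rev_rev, Fin.rev_rev] at h2
  · intro j hj
    simp only [Finset.mem_filter, Finset.mem_univ, true_and] at hj
    refine ⟨j.rev, ?_, Fin.rev_rev j⟩
    simp only [Finset.mem_filter, Finset.mem_univ, true_and]
    refine ⟨(j.rev).2, ?_⟩
    show dnat σ j.rev.rev = 0
    rw [Fin.rev_rev]
    exact hj

end PFproof

/-- Petersen.  For every `n ≥ 1` and all `a b : ℕ`, the number of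
permutations of `[n]` with `inv = a` and `rmin = b` equals the number with
`sor = a` and `cyc = b`. -/
theorem inv_rmin_sor_cyc_equidistributed (n : ℕ) (hn : 1 ≤ n) (a b : ℕ) :
    Nat.card {σ : Equiv.Perm (Fin n) // SortIdx.inv σ = a ∧ SortIdx.rmin σ = b} =
      Nat.card {σ : Equiv.Perm (Fin n) // SortIdx.sor σ = a ∧ SortIdx.cyc σ = b} := by
  have eA : {σ : Equiv.Perm (Fin n) // SortIdx.inv σ = a ∧ SortIdx.rmin σ = b} ≃
      {c : PFproof.Code n // PFproof.Zsum c n = a ∧ PFproof.Zcnt c n = b} :=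
    Equiv.subtypeEquiv (Equiv.ofBijective _ PFproof.acode2_bij)
      (fun σ => by
        rw [show (Equiv.ofBijective _ PFproof.acode2_bij) σ = PFproof.acode2 σ from rfl,
          PFproof.inv_acode2, PFproof.rmin_acode2])
  have eB : {c : PFproof.Code n // PFproof.Zsum c n = a ∧ PFproof.Zcnt c n = b} ≃
      {σ : Equiv.Perm (Fin n) // SortIdx.sor σ = a ∧ SortIdx.cyc σ = b} :=
    Equiv.subtypeEquiv (Equiv.ofBijective _ PFproof.decB_bij)
      (fun c => by
        rw [show (Equiv.ofBijective _ PFproof.decB_bij) c = PFproof.LL c n from rfl,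
          PFproof.sor_LL, PFproof.cyc_LL_full])
  exact Nat.card_congr (eA.trans eB)
end

section
/- For every n ≥ 1, the following polynomial identity holds in ℤ[q,x]: Σ_{σ∈S_n} q^{inv(σ)} x^{rmin(σ)} = Σ_{σ∈S_n} q^{sor(σ)} x^{cyc(σ)} = x · ∏_{r=2}^{n} (x + [r]_q − 1). -/
open scoped Classical

namespace SortIdx
open Equiv Finset
noncomputable section
variable {n : ℕ}

/-- extend a permutation of `Fin n` to `Fin (n+1)` fixing `last n`. -/
def ext (τ : Perm (Fin n)) : Perm (Fin (n + 1)) where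
  toFun := Fin.lastCases (Fin.last n) (fun a => (τ a).castSucc)
  invFun := Fin.lastCases (Fin.last n) (fun a => (τ⁻¹ a).castSucc)
  left_inv := by
    intro j
    cases j using Fin.lastCases with
    | last => simp
    | cast a => simp
  right_inv := by
    intro j
    cases j using Fin.lastCases with
    | last => simp
    | cast a => simp

@[simp] lemma ext_castSucc (τ : Perm (Fin n)) (a : Fin n) :
    ext τ a.castSucc = (τ a).castSucc := by simp [ext]

@[simp] lemma ext_last (τ : Perm (Fin n)) : ext τ (Fin.last n) = Fin.last n := by simp [ext]

lemma ext_mul (τ π : Perm (Fin n)) : ext (τ * π) = ext τ * ext π := by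
  ext j
  cases j using Fin.lastCases with
  | last => simp
  | cast a => simp [Perm.mul_apply]

@[simp] lemma ext_one : ext (1 : Perm (Fin n)) = 1 := by
  ext j
  cases j using Fin.lastCases with
  | last => simp
  | cast a => simp

lemma ext_inv (τ : Perm (Fin n)) : (ext τ)⁻¹ = ext τ⁻¹ := by
  rw [inv_eq_iff_mul_eq_one, ← ext_mul]
  simp

lemma ext_pow (τ : Perm (Fin n)) (k : ℕ) : (ext τ) ^ k = ext (τ ^ k) := by
  induction k with
  | zero => simp
  | succ k ih => rw [pow_succ, pow_succ, ih, ext_mul]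

lemma ext_swap (a b : Fin n) : ext (swap a b) = swap a.castSucc b.castSucc := by
  ext j
  cases j using Fin.lastCases with
  | last =>
    rw [ext_last, swap_apply_of_ne_of_ne (Fin.castSucc_lt_last a).ne' (Fin.castSucc_lt_last b).ne']
  | cast c =>
    rw [ext_castSucc]
    rcases eq_or_ne c a with rfl | ha
    · simp
    rcases eq_or_ne c b with rfl | hb
    · simp
    rw [swap_apply_of_ne_of_ne ha hb,
      swap_apply_of_ne_of_ne (by simpa using ha) (by simpa using hb)]

lemma support_ext (τ : Perm (Fin n)) : (ext τ).support = τ.support.image Fin.castSucc := by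
  ext j
  cases j using Fin.lastCases with
  | last =>
    simp only [Perm.mem_support, ext_last, ne_eq, not_true_eq_false, false_iff, mem_image]
    rintro ⟨b, -, hb⟩
    exact (Fin.castSucc_lt_last b).ne hb
  | cast a =>
    simp only [Perm.mem_support, ext_castSucc, mem_image]
    constructor
    · intro h
      exact ⟨a, by simpa [Perm.mem_support, Fin.ext_iff] using h, rfl⟩
    · rintro ⟨b, hb, hba⟩
      have : b = a := Fin.castSucc_injective _ hba
      subst this
      simpa [Perm.mem_support, Fin.ext_iff] using hb


lemma sorAux_one (f : ℕ) : sorAux f (1 : Perm (Fin n)) = 0 := by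
  cases f <;> simp [sorAux]

lemma support_mul_swap_lt (σ : Perm (Fin n)) (h : σ.support.Nonempty) :
    ∀ k ∈ (σ * swap (σ⁻¹ (σ.support.max' h)) (σ.support.max' h)).support,
      (k : ℕ) < ((σ.support.max' h : Fin n) : ℕ) := by
  set m := σ.support.max' h with hm
  set i := σ⁻¹ m with hi
  have him : σ i = m := by simp [hi]
  have hine : i ≠ m := by
    intro hh
    have hmm : σ m = m := by rw [← hh, him]; exact hh.symm
    exact (Perm.mem_support.mp (σ.support.max'_mem h)) hmm
  have hi_mem : i ∈ σ.support := by
    refine Perm.mem_support.mpr ?_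
    rw [him]
    exact fun e => hine e.symm
  intro k hk
  have hk' : (σ * swap i m) k ≠ k := Perm.mem_support.mp hk
  have hkm : k ≠ m := by
    intro hkm; subst hkm
    exact hk' (by simp [Perm.mul_apply, him])
  have hks : k ∈ σ.support := by
    rcases eq_or_ne k i with rfl | hki
    · exact hi_mem
    · have : (σ * swap i m) k = σ k := by
        rw [Perm.mul_apply, swap_apply_of_ne_of_ne hki hkm]
      exact Perm.mem_support.mpr (by rwa [this] at hk')
  have : k ≤ m := σ.support.le_max' k hks
  exact Fin.lt_iff_val_lt_val.mp (lt_of_le_of_ne this hkm)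

lemma sorAux_congr : ∀ (f g : ℕ) (σ : Perm (Fin n)),
    (∀ k ∈ σ.support, (k : ℕ) < f) → (∀ k ∈ σ.support, (k : ℕ) < g) →
      sorAux f σ = sorAux g σ := by
  intro f
  induction f with
  | zero =>
    intro g σ hf _
    have : σ.support = ∅ := by
      by_contra hne
      obtain ⟨k, hk⟩ := Finset.nonempty_iff_ne_empty.mpr hne
      exact absurd (hf k hk) (Nat.not_lt_zero _)
    have : σ = 1 := Perm.support_eq_empty_iff.mp this
    subst this
    rw [sorAux_one, sorAux_one]
  | succ f ih =>
    intro g σ hf hg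
    cases g with
    | zero =>
      have : σ.support = ∅ := by
        by_contra hne
        obtain ⟨k, hk⟩ := Finset.nonempty_iff_ne_empty.mpr hne
        exact absurd (hg k hk) (Nat.not_lt_zero _)
      have : σ = 1 := Perm.support_eq_empty_iff.mp this
      subst this
      rw [sorAux_one, sorAux_one]
    | succ g =>
      by_cases h : σ.support.Nonempty
      · have hmf : ((σ.support.max' h : Fin n) : ℕ) < f + 1 := hf _ (σ.support.max'_mem h)
        have hmg : ((σ.support.max' h : Fin n) : ℕ) < g + 1 := hg _ (σ.support.max'_mem h)
        have hb := support_mul_swap_lt σ h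
        simp only [sorAux, dif_pos h]
        congr 1
        exact ih g _ (fun k hk => lt_of_lt_of_le (hb k hk) (Nat.lt_succ_iff.mp hmf))
          (fun k hk => lt_of_lt_of_le (hb k hk) (Nat.lt_succ_iff.mp hmg))
      · simp only [sorAux, dif_neg h]

lemma sor_eq_sorAux (σ : Perm (Fin n)) (f : ℕ) (hf : n ≤ f) : sor σ = sorAux f σ :=
  sorAux_congr n f σ (fun k _ => k.isLt) (fun k _ => lt_of_lt_of_le k.isLt hf)

lemma sorAux_ext (f : ℕ) (τ : Perm (Fin n)) : sorAux f (ext τ) = sorAux f τ := by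
  induction f generalizing τ with
  | zero => rfl
  | succ f ih =>
    have hsupp := support_ext τ
    by_cases h : τ.support.Nonempty
    · have h' : (ext τ).support.Nonempty := by rw [hsupp]; exact h.image _
      have hmax : (ext τ).support.max' h' = (τ.support.max' h).castSucc := by
        apply le_antisymm
        · apply Finset.max'_le
          intro y hy
          rw [hsupp, Finset.mem_image] at hy
          obtain ⟨b, hb, rfl⟩ := hy
          exact Fin.castSucc_le_castSucc_iff.mpr (τ.support.le_max' b hb)
        · apply Finset.le_max'
          rw [hsupp, Finset.mem_image]
          exact ⟨_, τ.support.max'_mem h, rfl⟩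
      set m := τ.support.max' h with hm
      have hinv : (ext τ)⁻¹ m.castSucc = (τ⁻¹ m).castSucc := by
        rw [ext_inv, ext_castSucc]
      simp only [sorAux, dif_pos h, dif_pos h', hmax, hinv]
      rw [← ext_swap, ← ext_mul, ih, Fin.coe_castSucc, Fin.coe_castSucc]
    · have h' : ¬ (ext τ).support.Nonempty := by
        rw [hsupp]; simpa [Finset.image_nonempty] using h
      simp only [sorAux, dif_neg h, dif_neg h']
lemma mem_cycSet {σ : Perm (Fin n)} {i : Fin n} :
    i ∈ CycSet σ ↔ ∀ k : ℕ, i ≤ (σ ^ k) i := by simp [CycSet]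

/-- the composite bijection used for `(sor, cyc)`. -/
def Emap (i : Fin (n + 1)) (τ : Perm (Fin n)) : Perm (Fin (n + 1)) :=
  ext τ * swap i (Fin.last n)

lemma Emap_apply_self (i : Fin (n + 1)) (τ : Perm (Fin n)) : Emap i τ i = Fin.last n := by
  simp [Emap, Perm.mul_apply]

lemma Emap_injective :
    Function.Injective (fun p : Fin (n + 1) × Perm (Fin n) => Emap p.1 p.2) := by
  rintro ⟨i, τ⟩ ⟨i', τ'⟩ h
  simp only at h
  have hi : i = i' := by
    have h1 := Emap_apply_self i τ
    have h2 := Emap_apply_self i' τ'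
    rw [h] at h1
    rw [← h2] at h1
    exact (Emap i' τ').injective h1
  subst hi
  have : ext τ = ext τ' := by
    have := congrArg (fun ρ => ρ * swap i (Fin.last n)) h
    simpa [Emap, mul_assoc] using this
  refine Prod.ext rfl ?_
  ext a
  have h3 := congrArg (fun ρ : Perm (Fin (n+1)) => ρ a.castSucc) this
  simp only [ext_castSucc] at h3
  exact congrArg Fin.val (Fin.castSucc_injective n h3)

lemma sor_ext (τ : Perm (Fin n)) : sor (ext τ) = sor τ := by
  rw [show sor (ext τ) = sorAux (n + 1) (ext τ) from rfl, sorAux_ext,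
    ← sor_eq_sorAux τ (n + 1) (Nat.le_succ n)]

lemma sor_Emap (i : Fin (n + 1)) (τ : Perm (Fin n)) :
    sor (Emap i τ) = (n - (i : ℕ)) + sor τ := by
  rcases eq_or_ne i (Fin.last n) with rfl | hne
  · rw [show Emap (Fin.last n) τ = ext τ by simp [Emap]; rfl, sor_ext]
    simp
  · set σ := Emap i τ with hσ
    have hii : σ i = Fin.last n := Emap_apply_self i τ
    have hlast : σ (Fin.last n) = (τ (i.castPred hne)).castSucc := by
      have h0 := ext_castSucc τ (i.castPred hne)
      rw [Fin.castSucc_castPred] at h0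
      rw [hσ, Emap, Perm.mul_apply, swap_apply_right, h0]
    have hmem : Fin.last n ∈ σ.support := by
      rw [Perm.mem_support, hlast]
      exact (Fin.castSucc_lt_last _).ne
    have hsne : σ.support.Nonempty := ⟨_, hmem⟩
    have hmax : σ.support.max' hsne = Fin.last n :=
      le_antisymm (Finset.max'_le _ _ _ (fun y _ => Fin.le_last y)) (Finset.le_max' _ _ hmem)
    have hinv : σ⁻¹ (Fin.last n) = i := by
      rw [Perm.inv_eq_iff_eq, hii]
    have hstep : σ * swap i (Fin.last n) = ext τ := by
      rw [hσ, Emap, mul_assoc, swap_mul_self, mul_one]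
    have : sor σ = sorAux (n + 1) σ := rfl
    rw [this]
    simp only [sorAux, dif_pos hsne, hmax, hinv, hstep, Fin.val_last]
    rw [sorAux_ext, ← sor_eq_sorAux τ n le_rfl]

lemma cyc_ext (τ : Perm (Fin n)) : cyc (ext τ) = cyc τ + 1 := by
  have hset : CycSet (ext τ) = insert (Fin.last n) ((CycSet τ).image Fin.castSucc) := by
    ext j
    cases j using Fin.lastCases with
    | last =>
      simp only [Finset.mem_insert, true_or, iff_true]
      rw [mem_cycSet]
      intro k
      rw [ext_pow, ext_last]
    | cast a =>
      rw [mem_cycSet]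
      simp only [Finset.mem_insert, Finset.mem_image]
      constructor
      · intro h
        right
        refine ⟨a, mem_cycSet.mpr (fun k => ?_), rfl⟩
        have := h k
        rwa [ext_pow, ext_castSucc, Fin.castSucc_le_castSucc_iff] at this
      · rintro ((h | ⟨b, hb, hba⟩))
        · exact absurd h (Fin.castSucc_lt_last a).ne
        · obtain rfl : b = a := Fin.castSucc_injective n hba
          intro k
          rw [ext_pow, ext_castSucc, Fin.castSucc_le_castSucc_iff]
          exact mem_cycSet.mp hb k
  rw [cyc, hset, Finset.card_insert_of_notMem, Finset.card_image_of_injective _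
    (Fin.castSucc_injective n), cyc]
  intro h
  obtain ⟨x, -, hx⟩ := Finset.mem_image.mp h
  exact (Fin.castSucc_lt_last x).ne hx

lemma cyc_insertion (σ : Perm (Fin (n + 1))) (τ : Perm (Fin n)) (i₀ : Fin n)
    (h1 : σ i₀.castSucc = Fin.last n) (h2 : σ (Fin.last n) = (τ i₀).castSucc)
    (h3 : ∀ a, a ≠ i₀ → σ a.castSucc = (τ a).castSucc) : cyc σ = cyc τ := by
  have hO1 : ∀ (m : Fin n) (k : ℕ), ∃ j : ℕ, (σ ^ j) m.castSucc = ((τ ^ k) m).castSucc := by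
    intro m k
    induction k with
    | zero => exact ⟨0, by simp⟩
    | succ k ih =>
      obtain ⟨j, hj⟩ := ih
      rcases eq_or_ne ((τ ^ k) m) i₀ with he | he
      · refine ⟨j + 2, ?_⟩
        have e1 : (σ ^ (j + 1)) m.castSucc = Fin.last n := by
          rw [pow_succ', Perm.mul_apply, hj, he, h1]
        rw [show j + 2 = (j + 1) + 1 from rfl, pow_succ', Perm.mul_apply, e1, h2,
          pow_succ', Perm.mul_apply, he]
      · refine ⟨j + 1, ?_⟩
        rw [pow_succ', Perm.mul_apply, hj, h3 _ he, pow_succ', Perm.mul_apply]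
  have hO2 : ∀ (m : Fin n) (j : ℕ),
      ((σ ^ j) m.castSucc = Fin.last n ∧ ∃ k : ℕ, (τ ^ k) m = i₀) ∨
        ∃ k : ℕ, (σ ^ j) m.castSucc = ((τ ^ k) m).castSucc := by
    intro m j
    induction j with
    | zero => exact Or.inr ⟨0, by simp⟩
    | succ j ih =>
      rcases ih with ⟨hl, k, hk⟩ | ⟨k, hk⟩
      · refine Or.inr ⟨k + 1, ?_⟩
        rw [pow_succ', Perm.mul_apply, hl, h2, pow_succ', Perm.mul_apply, hk]
      · rcases eq_or_ne ((τ ^ k) m) i₀ with he | he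
        · refine Or.inl ⟨?_, k, he⟩
          rw [pow_succ', Perm.mul_apply, hk, he, h1]
        · refine Or.inr ⟨k + 1, ?_⟩
          rw [pow_succ', Perm.mul_apply, hk, h3 _ he, pow_succ', Perm.mul_apply]
  have hlastmem : Fin.last n ∉ CycSet σ := by
    have hsc : σ.SameCycle (Fin.last n) i₀.castSucc :=
      (Perm.SameCycle.symm ⟨1, by simpa using h1⟩)
    obtain ⟨k, -, hk⟩ := hsc.exists_pow_eq'
    rw [mem_cycSet]
    push_neg
    exact ⟨k, by rw [hk]; exact Fin.castSucc_lt_last i₀⟩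
  have hset : CycSet σ = (CycSet τ).image Fin.castSucc := by
    ext j
    cases j using Fin.lastCases with
    | last =>
      constructor
      · exact fun h => absurd h hlastmem
      · intro h
        obtain ⟨x, -, hx⟩ := Finset.mem_image.mp h
        exact absurd hx (Fin.castSucc_lt_last x).ne
    | cast m =>
      rw [mem_cycSet]
      simp only [Finset.mem_image]
      constructor
      · intro h
        refine ⟨m, mem_cycSet.mpr (fun k => ?_), rfl⟩
        obtain ⟨j, hj⟩ := hO1 m k
        have := h j
        rwa [hj, Fin.castSucc_le_castSucc_iff] at this
      · rintro ⟨b, hb, hba⟩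
        obtain rfl : b = m := Fin.castSucc_injective n hba
        intro j
        rcases hO2 b j with ⟨hl, -⟩ | ⟨k, hk⟩
        · rw [hl]; exact Fin.le_last _
        · rw [hk, Fin.castSucc_le_castSucc_iff]
          exact mem_cycSet.mp hb k
  rw [cyc, hset, Finset.card_image_of_injective _ (Fin.castSucc_injective n), cyc]

lemma cyc_Emap (i : Fin (n + 1)) (τ : Perm (Fin n)) :
    cyc (Emap i τ) = cyc τ + (if i = Fin.last n then 1 else 0) := by
  rcases eq_or_ne i (Fin.last n) with rfl | hne
  · rw [show Emap (Fin.last n) τ = ext τ by simp [Emap]; rfl, cyc_ext, if_pos rfl]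
  · simp only [if_neg hne, Nat.add_zero]
    refine cyc_insertion _ τ (i.castPred hne) ?_ ?_ ?_
    · have h0 : (i.castPred hne).castSucc = i := Fin.castSucc_castPred i hne
      rw [h0, Emap, Perm.mul_apply, swap_apply_left, ext_last]
    · have h0 := ext_castSucc τ (i.castPred hne)
      rw [Fin.castSucc_castPred] at h0
      rw [Emap, Perm.mul_apply, swap_apply_right, h0]
    · intro a ha
      have h1 : a.castSucc ≠ i := by
        intro e
        apply ha
        apply Fin.castSucc_injective n
        rw [e, Fin.castSucc_castPred]
      have h2 : a.castSucc ≠ Fin.last n := (Fin.castSucc_lt_last a).ne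
      rw [Emap, Perm.mul_apply, swap_apply_of_ne_of_ne h1 h2, ext_castSucc]

/-- inserting the largest letter at place `i`. -/
def ins (i : Fin (n + 1)) (τ : Perm (Fin n)) : Perm (Fin (n + 1)) :=
  ((finSuccEquiv' i).trans (Equiv.optionCongr τ)).trans finSuccEquivLast.symm

@[simp] lemma ins_apply_self (i : Fin (n + 1)) (τ : Perm (Fin n)) :
    ins i τ i = Fin.last n := by
  simp [ins, finSuccEquiv'_at]

@[simp] lemma ins_succAbove (i : Fin (n + 1)) (τ : Perm (Fin n)) (a : Fin n) :
    ins i τ (i.succAbove a) = (τ a).castSucc := by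
  simp [ins, finSuccEquiv'_succAbove, finSuccEquivLast_symm_some]

lemma ins_injective :
    Function.Injective (fun p : Fin (n + 1) × Perm (Fin n) => ins p.1 p.2) := by
  rintro ⟨i, τ⟩ ⟨i', τ'⟩ h
  simp only at h
  have hi : i = i' := by
    by_contra hii
    obtain ⟨a, ha⟩ := Fin.exists_succAbove_eq hii
    have h1 : ins i' τ' i = (τ' a).castSucc := by rw [← ha, ins_succAbove]
    rw [← h, ins_apply_self] at h1
    exact (Fin.castSucc_lt_last (τ' a)).ne h1.symm
  subst hi
  refine Prod.ext rfl ?_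
  ext a
  have h2 : (τ a).castSucc = (τ' a).castSucc := by
    rw [← ins_succAbove i τ a, h, ins_succAbove]
  exact congrArg Fin.val (Fin.castSucc_injective n h2)

lemma inv_eq_card (σ : Perm (Fin n)) : inv σ = (InvSet σ).card := rfl

lemma inv_ins (i : Fin (n + 1)) (τ : Perm (Fin n)) :
    inv (ins i τ) = inv τ + (n - (i : ℕ)) := by
  have hset : InvSet (ins i τ) =
      ((InvSet τ).image (fun p : Fin n × Fin n => (i.succAbove p.1, i.succAbove p.2))) ∪
        ((Finset.Ioi i).image (fun j => (i, j))) := by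
    ext ⟨a, b⟩
    simp only [InvSet, Finset.mem_filter, Finset.mem_univ, true_and, Finset.mem_union,
      Finset.mem_image, Finset.mem_Ioi, Prod.mk.injEq, Prod.exists]
    constructor
    · rintro ⟨hab, hσ⟩
      rcases eq_or_ne b i with rfl | hb
      · rw [ins_apply_self] at hσ
        exact absurd hσ (not_lt.mpr (Fin.le_last _))
      obtain ⟨b', rfl⟩ := Fin.exists_succAbove_eq hb
      rcases eq_or_ne a i with heq | ha
      · subst heq
        exact Or.inr ⟨a.succAbove b', hab, rfl, rfl⟩
      obtain ⟨a', rfl⟩ := Fin.exists_succAbove_eq ha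
      refine Or.inl ⟨a', b', ⟨?_, ?_⟩, rfl, rfl⟩
      · exact (Fin.succAbove_lt_succAbove_iff).mp hab
      · rw [ins_succAbove, ins_succAbove, Fin.castSucc_lt_castSucc_iff] at hσ
        exact hσ
    · rintro (⟨a', b', ⟨h1, h2⟩, rfl, rfl⟩ | ⟨j, hj, rfl, rfl⟩)
      · refine ⟨Fin.succAbove_lt_succAbove_iff.mpr h1, ?_⟩
        rw [ins_succAbove, ins_succAbove, Fin.castSucc_lt_castSucc_iff]
        exact h2
      · refine ⟨hj, ?_⟩
        obtain ⟨b', rfl⟩ := Fin.exists_succAbove_eq (ne_of_gt hj)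
        rw [ins_apply_self, ins_succAbove]
        exact Fin.castSucc_lt_last _
  have hdisj : Disjoint ((InvSet τ).image
      (fun p : Fin n × Fin n => (i.succAbove p.1, i.succAbove p.2)))
      ((Finset.Ioi i).image (fun j => (i, j))) := by
    rw [Finset.disjoint_left]
    rintro ⟨x, y⟩ hx hy
    simp only [Finset.mem_image, Prod.mk.injEq, Prod.exists] at hx hy
    obtain ⟨a', b', -, ha, -⟩ := hx
    obtain ⟨j, -, hj, -⟩ := hy
    rw [← hj] at ha
    exact Fin.succAbove_ne i a' ha
  rw [inv_eq_card, hset, Finset.card_union_of_disjoint hdisj,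
    Finset.card_image_of_injective, Finset.card_image_of_injective, Fin.card_Ioi,
    ← inv_eq_card]
  · simp
  · exact fun x y hxy => by simpa [Prod.ext_iff] using hxy
  · intro p q hpq
    simp only [Prod.mk.injEq] at hpq
    exact Prod.ext (Fin.succAbove_right_injective hpq.1) (Fin.succAbove_right_injective hpq.2)

lemma rmin_eq_card (σ : Perm (Fin n)) : rmin σ = (RmipSet σ).card :=
  Finset.card_image_of_injective _ σ.injective

lemma rmin_ins (i : Fin (n + 1)) (τ : Perm (Fin n)) :
    rmin (ins i τ) = rmin τ + (if i = Fin.last n then 1 else 0) := by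
  have hset : RmipSet (ins i τ) =
      ((RmipSet τ).image i.succAbove) ∪ (if i = Fin.last n then {i} else ∅) := by
    ext p
    simp only [RmipSet, Finset.mem_filter, Finset.mem_univ, true_and, Finset.mem_union,
      Finset.mem_image]
    rcases eq_or_ne p i with rfl | hp
    · constructor
      · intro h
        rcases eq_or_ne p (Fin.last n) with rfl | hpl
        · simp
        · exfalso
          have hlt : p < Fin.last n := lt_of_le_of_ne (Fin.le_last p) hpl
          have := h (Fin.last n) hlt
          rw [ins_apply_self] at this
          obtain ⟨b, hb⟩ := Fin.exists_succAbove_eq (show Fin.last n ≠ p from hpl.symm)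
          have h2 : ins p τ (Fin.last n) = (τ b).castSucc := by rw [← hb, ins_succAbove]
          rw [h2] at this
          exact absurd this (not_lt.mpr (Fin.le_last _))
      · intro h
        have hpl : p = Fin.last n := by
          rcases h with ⟨a, -, ha⟩ | h
          · exact absurd ha (Fin.succAbove_ne p a)
          · by_contra hne
            simp [if_neg hne] at h
        intro j hj
        exact absurd (hpl ▸ hj) (not_lt.mpr (Fin.le_last j))
    · obtain ⟨a, rfl⟩ := Fin.exists_succAbove_eq hp
      constructor
      · intro h
        refine Or.inl ⟨a, fun b hb => ?_, rfl⟩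
        have := h (i.succAbove b) (Fin.succAbove_lt_succAbove_iff.mpr hb)
        rwa [ins_succAbove, ins_succAbove, Fin.castSucc_lt_castSucc_iff] at this
      · rintro (⟨a', ha', haa⟩ | h)
        · obtain rfl : a' = a := Fin.succAbove_right_injective haa
          intro j hj
          rcases eq_or_ne j i with rfl | hji
          · rw [ins_succAbove, ins_apply_self]
            exact Fin.castSucc_lt_last _
          · obtain ⟨b, rfl⟩ := Fin.exists_succAbove_eq hji
            rw [ins_succAbove, ins_succAbove, Fin.castSucc_lt_castSucc_iff]
            exact ha' b (Fin.succAbove_lt_succAbove_iff.mp hj)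
        · exfalso
          rcases eq_or_ne i (Fin.last n) with rfl | hne
          · rw [if_pos rfl] at h
            exact Fin.succAbove_ne (Fin.last n) a (Finset.mem_singleton.mp h)
          · rw [if_neg hne] at h
            exact absurd h (Finset.notMem_empty _)
  have hdisj : Disjoint ((RmipSet τ).image i.succAbove)
      (if i = Fin.last n then ({i} : Finset (Fin (n + 1))) else ∅) := by
    rw [Finset.disjoint_left]
    intro x hx hx'
    obtain ⟨a, -, rfl⟩ := Finset.mem_image.mp hx
    rcases eq_or_ne i (Fin.last n) with rfl | hne
    · rw [if_pos rfl, Finset.mem_singleton] at hx'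
      exact Fin.succAbove_ne _ a hx'
    · rw [if_neg hne] at hx'
      exact Finset.notMem_empty _ hx'
  rw [rmin_eq_card, hset, Finset.card_union_of_disjoint hdisj,
    Finset.card_image_of_injective _ Fin.succAbove_right_injective, ← rmin_eq_card]
  congr 1
  split <;> simp

open MvPolynomial in
lemma sum_factor (n : ℕ) :
    (∑ i : Fin (n + 1), (X 0 : MvPolynomial (Fin 2) ℤ) ^ (n - (i : ℕ)) *
        X 1 ^ (if i = Fin.last n then 1 else 0)) =
      X 1 + (∑ t ∈ Finset.range (n + 1), (X 0 : MvPolynomial (Fin 2) ℤ) ^ t) - 1 := by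
  have hlast : (X 0 : MvPolynomial (Fin 2) ℤ) ^ (n - ((Fin.last n : Fin (n + 1)) : ℕ)) *
      X 1 ^ (if (Fin.last n : Fin (n + 1)) = Fin.last n then 1 else 0) = X 1 := by
    rw [if_pos rfl, Fin.val_last, Nat.sub_self, pow_zero, one_mul, pow_one]
  have hcast : ∀ a : Fin n, (X 0 : MvPolynomial (Fin 2) ℤ) ^ (n - ((a.castSucc : Fin (n + 1)) : ℕ)) *
      X 1 ^ (if (a.castSucc : Fin (n + 1)) = Fin.last n then 1 else 0) = X 0 ^ (n - (a : ℕ)) := by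
    intro a
    rw [if_neg (Fin.castSucc_lt_last a).ne, pow_zero, mul_one, Fin.coe_castSucc]
  rw [Fin.sum_univ_castSucc, hlast, Finset.sum_congr rfl (fun a _ => hcast a),
    Fin.sum_univ_eq_sum_range (fun j => (X 0 : MvPolynomial (Fin 2) ℤ) ^ (n - j)) n]
  have h3 : (∑ j ∈ Finset.range n, (X 0 : MvPolynomial (Fin 2) ℤ) ^ (n - j)) =
      ∑ j ∈ Finset.range n, X 0 ^ (j + 1) := by
    rw [← Finset.sum_range_reflect]
    refine Finset.sum_congr rfl (fun j hj => ?_)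
    have : n - (n - 1 - j) = j + 1 := by
      have := Finset.mem_range.mp hj; omega
    rw [this]
  have h4 : (∑ t ∈ Finset.range (n + 1), (X 0 : MvPolynomial (Fin 2) ℤ) ^ t) =
      (∑ j ∈ Finset.range n, X 0 ^ (j + 1)) + 1 := by
    rw [Finset.sum_range_succ']
    simp
  rw [h3, h4]
  ring

open MvPolynomial in
lemma step_invrmin (n : ℕ) :
    (∑ σ : Perm (Fin (n + 1)), (X 0 : MvPolynomial (Fin 2) ℤ) ^ inv σ * X 1 ^ rmin σ) =
      (X 1 + (∑ t ∈ Finset.range (n + 1), (X 0 : MvPolynomial (Fin 2) ℤ) ^ t) - 1) *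
        ∑ τ : Perm (Fin n), (X 0 : MvPolynomial (Fin 2) ℤ) ^ inv τ * X 1 ^ rmin τ := by
  have hbij : Function.Bijective (fun p : Fin (n + 1) × Perm (Fin n) => ins p.1 p.2) := by
    rw [Fintype.bijective_iff_injective_and_card]
    exact ⟨ins_injective, by simp [Fintype.card_perm, Nat.factorial_succ]⟩
  rw [← Fintype.sum_bijective _ hbij
    (fun p : Fin (n + 1) × Perm (Fin n) =>
      (X 0 : MvPolynomial (Fin 2) ℤ) ^ inv (ins p.1 p.2) * X 1 ^ rmin (ins p.1 p.2))
    (fun σ => (X 0 : MvPolynomial (Fin 2) ℤ) ^ inv σ * X 1 ^ rmin σ) (fun p => rfl),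
    Fintype.sum_prod_type]
  have hterm : ∀ (i : Fin (n + 1)) (τ : Perm (Fin n)),
      (X 0 : MvPolynomial (Fin 2) ℤ) ^ inv (ins i τ) * X 1 ^ rmin (ins i τ) =
        (X 0 ^ (n - (i : ℕ)) * X 1 ^ (if i = Fin.last n then 1 else 0)) *
          (X 0 ^ inv τ * X 1 ^ rmin τ) := by
    intro i τ
    rw [inv_ins, rmin_ins, pow_add, pow_add]
    ring
  simp_rw [hterm, ← Finset.mul_sum]
  rw [← Finset.sum_mul, sum_factor]

open MvPolynomial in
lemma step_sorcyc (n : ℕ) :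
    (∑ σ : Perm (Fin (n + 1)), (X 0 : MvPolynomial (Fin 2) ℤ) ^ sor σ * X 1 ^ cyc σ) =
      (X 1 + (∑ t ∈ Finset.range (n + 1), (X 0 : MvPolynomial (Fin 2) ℤ) ^ t) - 1) *
        ∑ τ : Perm (Fin n), (X 0 : MvPolynomial (Fin 2) ℤ) ^ sor τ * X 1 ^ cyc τ := by
  have hbij : Function.Bijective (fun p : Fin (n + 1) × Perm (Fin n) => Emap p.1 p.2) := by
    rw [Fintype.bijective_iff_injective_and_card]
    exact ⟨Emap_injective, by simp [Fintype.card_perm, Nat.factorial_succ]⟩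
  rw [← Fintype.sum_bijective _ hbij
    (fun p : Fin (n + 1) × Perm (Fin n) =>
      (X 0 : MvPolynomial (Fin 2) ℤ) ^ sor (Emap p.1 p.2) * X 1 ^ cyc (Emap p.1 p.2))
    (fun σ => (X 0 : MvPolynomial (Fin 2) ℤ) ^ sor σ * X 1 ^ cyc σ) (fun p => rfl),
    Fintype.sum_prod_type]
  have hterm : ∀ (i : Fin (n + 1)) (τ : Perm (Fin n)),
      (X 0 : MvPolynomial (Fin 2) ℤ) ^ sor (Emap i τ) * X 1 ^ cyc (Emap i τ) =
        (X 0 ^ (n - (i : ℕ)) * X 1 ^ (if i = Fin.last n then 1 else 0)) *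
          (X 0 ^ sor τ * X 1 ^ cyc τ) := by
    intro i τ
    rw [sor_Emap, cyc_Emap, pow_add, pow_add]
    ring
  simp_rw [hterm, ← Finset.mul_sum]
  rw [← Finset.sum_mul, sum_factor]

open MvPolynomial in
lemma base0_inv :
    (∑ σ : Perm (Fin 0), (X 0 : MvPolynomial (Fin 2) ℤ) ^ inv σ * X 1 ^ rmin σ) = 1 := by
  haveI : Subsingleton (Perm (Fin 0)) := ⟨fun a b => Equiv.ext fun x => x.elim0⟩
  rw [Fintype.sum_subsingleton _ 1]
  have h1 : inv (1 : Perm (Fin 0)) = 0 := by simp [inv]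
  have h2 : rmin (1 : Perm (Fin 0)) = 0 := by simp [rmin, RmilSet]
  rw [h1, h2, pow_zero, pow_zero, one_mul]

open MvPolynomial in
lemma base0_sor :
    (∑ σ : Perm (Fin 0), (X 0 : MvPolynomial (Fin 2) ℤ) ^ sor σ * X 1 ^ cyc σ) = 1 := by
  haveI : Subsingleton (Perm (Fin 0)) := ⟨fun a b => Equiv.ext fun x => x.elim0⟩
  rw [Fintype.sum_subsingleton _ 1]
  have h1 : sor (1 : Perm (Fin 0)) = 0 := rfl
  have h2 : cyc (1 : Perm (Fin 0)) = 0 := by simp [cyc, CycSet]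
  rw [h1, h2, pow_zero, pow_zero, one_mul]

open MvPolynomial in
lemma prod_eq_both (n : ℕ) (hn : 1 ≤ n) :
    ((∑ σ : Perm (Fin n), (X 0 : MvPolynomial (Fin 2) ℤ) ^ inv σ * X 1 ^ rmin σ) =
      X 1 * ∏ r ∈ Finset.Icc 2 n,
        (X 1 + (∑ t ∈ Finset.range r, (X 0 : MvPolynomial (Fin 2) ℤ) ^ t) - 1)) ∧
    ((∑ σ : Perm (Fin n), (X 0 : MvPolynomial (Fin 2) ℤ) ^ sor σ * X 1 ^ cyc σ) =
      X 1 * ∏ r ∈ Finset.Icc 2 n,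
        (X 1 + (∑ t ∈ Finset.range r, (X 0 : MvPolynomial (Fin 2) ℤ) ^ t) - 1)) := by
  induction n, hn using Nat.le_induction with
  | base =>
    have he : Finset.Icc 2 1 = (∅ : Finset ℕ) := Finset.Icc_eq_empty (by norm_num)
    have hf : (X 1 + (∑ t ∈ Finset.range 1, (X 0 : MvPolynomial (Fin 2) ℤ) ^ t) - 1) = X 1 := by
      rw [Finset.sum_range_one, pow_zero]
      ring
    constructor
    · rw [step_invrmin 0, base0_inv, he, Finset.prod_empty, hf, mul_one]
    · rw [step_sorcyc 0, base0_sor, he, Finset.prod_empty, hf, mul_one]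
  | succ n hn ih =>
    have hp : (∏ r ∈ Finset.Icc 2 (n + 1),
        (X 1 + (∑ t ∈ Finset.range r, (X 0 : MvPolynomial (Fin 2) ℤ) ^ t) - 1)) =
      (∏ r ∈ Finset.Icc 2 n,
        (X 1 + (∑ t ∈ Finset.range r, (X 0 : MvPolynomial (Fin 2) ℤ) ^ t) - 1)) *
        (X 1 + (∑ t ∈ Finset.range (n + 1), (X 0 : MvPolynomial (Fin 2) ℤ) ^ t) - 1) :=
      Finset.prod_Icc_succ_top (by omega) _
    constructor
    · rw [step_invrmin n, ih.1, hp]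
      ring
    · rw [step_sorcyc n, ih.2, hp]
      ring

end
end SortIdx

open MvPolynomial in
/-- Petersen.  In `ℤ[q,x]` (with `q = X 0`, `x = X 1`):
`∑_σ q^{inv σ} x^{rmin σ} = ∑_σ q^{sor σ} x^{cyc σ} = x ∏_{r=2}^n (x + [r]_q - 1)`. -/
theorem genfun_inv_rmin_eq_sor_cyc (n : ℕ) (hn : 1 ≤ n) :
    (∑ σ : Equiv.Perm (Fin n),
        (X 0 : MvPolynomial (Fin 2) ℤ) ^ SortIdx.inv σ * X 1 ^ SortIdx.rmin σ) =
      (∑ σ : Equiv.Perm (Fin n),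
        (X 0 : MvPolynomial (Fin 2) ℤ) ^ SortIdx.sor σ * X 1 ^ SortIdx.cyc σ) ∧
    (∑ σ : Equiv.Perm (Fin n),
        (X 0 : MvPolynomial (Fin 2) ℤ) ^ SortIdx.sor σ * X 1 ^ SortIdx.cyc σ) =
      X 1 * ∏ r ∈ Finset.Icc 2 n,
        (X 1 + (∑ t ∈ Finset.range r, (X 0 : MvPolynomial (Fin 2) ℤ) ^ t) - 1) := by
  obtain ⟨h1, h2⟩ := SortIdx.prod_eq_both n hn
  exact ⟨h1.trans h2.symm, h2⟩
end

section
/- For every σ ∈ S_n, Rmil(σ) = Cyc(φ(σ)) and Lmap(σ) = Lmap(φ(σ)); that is, (Rmil, Lmap)(σ) = (Cyc, Lmap)(φ(σ)). -/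
open scoped Classical

namespace SortIdx

open Equiv Finset

variable {n : ℕ}

lemma perm_apply_inv_self {α : Type*} (f : Equiv.Perm α) (x : α) : f (f⁻¹ x) = x := by simp

lemma perm_inv_apply_self {α : Type*} (f : Equiv.Perm α) (x : α) : f⁻¹ (f x) = x := by simp

lemma bcode_def (σ : Equiv.Perm (Fin n)) (i : Fin n) :
    Bcode σ i = (σ⁻¹ ^ (Nat.find (bcode_exists σ i))) i := rfl

lemma bcode_le (σ : Equiv.Perm (Fin n)) (i : Fin n) : Bcode σ i ≤ i :=
  (Nat.find_spec (bcode_exists σ i)).2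

lemma bcode_eq (σ : Equiv.Perm (Fin n)) (i : Fin n) (K : ℕ) (hK : 0 < K)
    (h1 : (σ⁻¹ ^ K) i ≤ i) (h2 : ∀ j, 0 < j → j < K → ¬ (σ⁻¹ ^ j) i ≤ i) :
    Bcode σ i = (σ⁻¹ ^ K) i := by
  have hfind : Nat.find (bcode_exists σ i) = K := by
    rw [Nat.find_eq_iff]
    exact ⟨⟨hK, h1⟩, fun j hj hPj => h2 j hPj.1 hj hPj.2⟩
  rw [bcode_def, hfind]

lemma bcode_of_inv_le (σ : Equiv.Perm (Fin n)) (i : Fin n) (h : σ⁻¹ i ≤ i) :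
    Bcode σ i = σ⁻¹ i := by
  have := bcode_eq σ i 1 one_pos (by simpa using h) (by omega)
  simpa using this

lemma bcode_of_fixed (σ : Equiv.Perm (Fin n)) (i : Fin n) (h : σ i = i) :
    Bcode σ i = i := by
  have hi : σ⁻¹ i = i := by rw [Equiv.Perm.inv_eq_iff_eq]; exact h.symm
  rw [bcode_of_inv_le σ i (le_of_eq hi), hi]

end SortIdx
namespace SortIdx

variable {n : ℕ}

lemma bcode_swap_step (σ : Equiv.Perm (Fin n)) (k i : Fin n) (hik : i < k) :
    Bcode (σ * Equiv.swap (σ⁻¹ k) k) i = Bcode σ i := by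
  set b : Fin n := σ⁻¹ k with hb
  set σ' : Equiv.Perm (Fin n) := σ * Equiv.swap b k with hσ'
  set f : Equiv.Perm (Fin n) := σ⁻¹ with hf
  have hfk : f k = b := rfl
  have hf' : ∀ x, σ'⁻¹ x = Equiv.swap b k (f x) := by
    intro x
    simp [hσ', mul_inv_rev, Equiv.Perm.mul_apply, Equiv.swap_inv, hf]
  have hpowf' : ∀ (j : ℕ) (x : Fin n), (σ'⁻¹ ^ (j+1)) x = Equiv.swap b k (f ((σ'⁻¹ ^ j) x)) := by
    intro j x
    rw [pow_succ', Equiv.Perm.mul_apply, hf']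
  have hpowf : ∀ (j : ℕ) (x : Fin n), (f ^ (j+1)) x = f ((f ^ j) x) := by
    intro j x
    rw [pow_succ', Equiv.Perm.mul_apply]
  set K := Nat.find (bcode_exists σ i) with hK
  have hK1 : 0 < K := (Nat.find_spec (bcode_exists σ i)).1
  have hKle : (f ^ K) i ≤ i := (Nat.find_spec (bcode_exists σ i)).2
  have hKmin : ∀ j, 0 < j → j < K → ¬ (f ^ j) i ≤ i := by
    intro j hj hjK hle
    exact Nat.find_min (bcode_exists σ i) hjK ⟨hj, hle⟩
  have hBσ : Bcode σ i = (f ^ K) i := rfl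
  have hik' : i ≠ k := ne_of_lt hik
  -- from f^{j+1} i = b we get f^j i = k
  have hbk : ∀ j : ℕ, (f ^ (j+1)) i = b → (f ^ j) i = k := by
    intro j hj
    have : f ((f ^ j) i) = f k := by rw [← hpowf j i, hj, hfk]
    exact (Equiv.injective f) this
  have horbit : ∀ s t, 0 < s → s < t → t ≤ K → (f ^ s) i = (f ^ t) i → False := by
    intro s t hs0 hst htK heq
    have h1 : (f ^ s) ((f ^ (t - s)) i) = (f ^ s) i := by
      rw [← Equiv.Perm.mul_apply, ← pow_add]
      rw [show s + (t - s) = t by omega]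
      exact heq.symm
    have h2 : (f ^ (t - s)) i = i := (Equiv.injective _) h1
    exact hKmin (t - s) (by omega) (by omega) (le_of_eq h2)
  by_cases hkorb : ∃ t, t ≤ K ∧ (f ^ t) i = k
  · -- case (b): the value k appears on the orbit
    have hex : ∃ t, (f ^ t) i = k := ⟨hkorb.choose, hkorb.choose_spec.2⟩
    obtain ⟨t, htk, htmin⟩ : ∃ t, (f ^ t) i = k ∧ ∀ j, j < t → (f ^ j) i ≠ k :=
      ⟨Nat.find hex, Nat.find_spec hex, fun j hj => Nat.find_min hex hj⟩
    have htK : t ≤ K := by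
      refine le_trans (le_of_not_gt (fun h => ?_)) hkorb.choose_spec.1
      exact htmin _ h hkorb.choose_spec.2
    have ht1 : 0 < t := by
      rcases Nat.eq_zero_or_pos t with h0 | h; · rw [h0] at htk; simp at htk; exact absurd htk hik'
      exact h
    have htltK : t < K := by
      rcases Nat.lt_or_ge t K with h | h; · exact h
      have : t = K := le_antisymm htK h
      rw [← this, htk] at hKle
      exact absurd (lt_of_lt_of_le hik hKle) (lt_irrefl i)
    have huniq : ∀ j, j ≤ K → (f ^ j) i = k → j = t := by
      intro j hjK hjk
      rcases lt_trichotomy j t with h | h | h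
      · exact absurd hjk (htmin j h)
      · exact h
      · exact absurd (htk.trans hjk.symm) (fun he => horbit t j ht1 h hjK he)
    -- claim1 : for j < t the orbits agree
    have claim1 : ∀ j, j < t → (σ'⁻¹ ^ j) i = (f ^ j) i := by
      intro j hj
      induction j with
      | zero => simp
      | succ m ih =>
        rw [hpowf' m i, ih (by omega), ← hpowf m i]
        have h1 : (f ^ (m+1)) i ≠ b := fun he => htmin m (by omega) (hbk m he)
        have h2 : (f ^ (m+1)) i ≠ k := htmin (m+1) hj
        exact Equiv.swap_apply_of_ne_of_ne h1 h2
    -- claim2 : crossing at step t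
    have claim2 : (σ'⁻¹ ^ t) i = (f ^ (t+1)) i := by
      obtain ⟨t', rfl⟩ : ∃ t', t = t' + 1 := ⟨t - 1, by omega⟩
      rw [hpowf' t' i, claim1 t' (by omega), ← hpowf t' i, htk, Equiv.swap_apply_right,
        hpowf (t'+1) i, htk, hfk]
    -- claim3 : after crossing shifted by one
    have claim3 : ∀ j, t ≤ j → j ≤ K - 1 → (σ'⁻¹ ^ j) i = (f ^ (j+1)) i := by
      intro j hj
      induction j, hj using Nat.le_induction with
      | base => intro _; exact claim2
      | succ m hm ih =>
        intro hmK
        rw [hpowf' m i, ih (by omega), ← hpowf (m+1) i]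
        have h2 : (f ^ (m+2)) i ≠ k := by
          intro he
          have := huniq (m+2) (by omega) he
          omega
        have h1 : (f ^ (m+2)) i ≠ b := by
          intro he
          have := huniq (m+1) (by omega) (hbk (m+1) he)
          omega
        exact Equiv.swap_apply_of_ne_of_ne h1 h2
    have hres : Bcode σ' i = (σ'⁻¹ ^ (K-1)) i := by
      apply bcode_eq σ' i (K-1) (by omega)
      · rw [claim3 (K-1) (by omega) (le_refl _), show K - 1 + 1 = K by omega]
        exact hKle
      · intro j hj0 hjK hle
        rcases Nat.lt_or_ge j t with h | h
        · rw [claim1 j h] at hle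
          exact hKmin j hj0 (by omega) hle
        · rw [claim3 j h (by omega)] at hle
          exact hKmin (j+1) (by omega) (by omega) hle
    rw [hres, claim3 (K-1) (by omega) (le_refl _), show K - 1 + 1 = K by omega, hBσ]
  · -- case (a): k never appears on the relevant orbit
    push_neg at hkorb
    have claim : ∀ j, j ≤ K → (σ'⁻¹ ^ j) i = (f ^ j) i := by
      intro j hj
      induction j with
      | zero => simp
      | succ m ih =>
        rw [hpowf' m i, ih (by omega), ← hpowf m i]
        have h2 : (f ^ (m+1)) i ≠ k := hkorb (m+1) hj
        have h1 : (f ^ (m+1)) i ≠ b := fun he => hkorb m (by omega) (hbk m he)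
        exact Equiv.swap_apply_of_ne_of_ne h1 h2
    have hres : Bcode σ' i = (σ'⁻¹ ^ K) i := by
      apply bcode_eq σ' i K hK1
      · rw [claim K (le_refl _)]; exact hKle
      · intro j hj0 hjK hle
        rw [claim j (by omega)] at hle
        exact hKmin j hj0 hjK hle
    rw [hres, claim K (le_refl _), hBσ]

end SortIdx
namespace SortIdx

variable {n : ℕ}

lemma inj_aux (m : ℕ) : ∀ σ τ : Equiv.Perm (Fin n),
    (∀ j : Fin n, m ≤ (j:ℕ) → σ j = j) → (∀ j : Fin n, m ≤ (j:ℕ) → τ j = j) →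
    Bcode σ = Bcode τ → σ = τ := by
  induction m with
  | zero =>
    intro σ τ hσ hτ _
    have h1 : σ = 1 := Equiv.ext fun j => hσ j (Nat.zero_le _)
    have h2 : τ = 1 := Equiv.ext fun j => hτ j (Nat.zero_le _)
    rw [h1, h2]
  | succ m ih =>
    intro σ τ hσ hτ hB
    by_cases hmn : m < n
    · obtain ⟨k, hkm⟩ : ∃ k : Fin n, (k:ℕ) = m := ⟨⟨m, hmn⟩, rfl⟩
      have hσk : (σ⁻¹ k : ℕ) ≤ m := by
        by_contra h
        push_neg at h
        have h1 := hσ (σ⁻¹ k) h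
        rw [SortIdx.perm_apply_inv_self] at h1
        rw [← h1] at h
        omega
      have hτk : (τ⁻¹ k : ℕ) ≤ m := by
        by_contra h
        push_neg at h
        have h1 := hτ (τ⁻¹ k) h
        rw [SortIdx.perm_apply_inv_self] at h1
        rw [← h1] at h
        omega
      have hBσk : Bcode σ k = σ⁻¹ k := bcode_of_inv_le σ k (by rw [Fin.le_def]; omega)
      have hBτk : Bcode τ k = τ⁻¹ k := bcode_of_inv_le τ k (by rw [Fin.le_def]; omega)
      have hpq : σ⁻¹ k = τ⁻¹ k := by rw [← hBσk, ← hBτk, hB]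
      obtain ⟨p, hp⟩ : ∃ p : Fin n, p = σ⁻¹ k := ⟨_, rfl⟩
      have hpm : (p:ℕ) ≤ m := by rw [hp]; exact hσk
      have key : ∀ ρ : Equiv.Perm (Fin n), (∀ j : Fin n, m + 1 ≤ (j:ℕ) → ρ j = j) →
          ρ⁻¹ k = p → ∀ j : Fin n, m ≤ (j:ℕ) → (ρ * Equiv.swap p k) j = j := by
        intro ρ hρ hρk j hj
        rcases eq_or_ne j k with rfl | hne
        · rw [Equiv.Perm.mul_apply, Equiv.swap_apply_right, ← hρk, SortIdx.perm_apply_inv_self]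
        · have hjk : (k:ℕ) < (j:ℕ) := by
            rcases Nat.eq_or_lt_of_le hj with h | h
            · exact absurd (Fin.ext (by omega) : j = k) hne
            · omega
          have hjp : j ≠ p := fun he => by rw [he] at hjk; omega
          rw [Equiv.Perm.mul_apply, Equiv.swap_apply_of_ne_of_ne hjp hne]
          exact hρ j (by omega)
      have hσ'fix := key σ hσ hp.symm
      have hτ'fix := key τ hτ (by rw [hp, hpq])
      have hB' : Bcode (σ * Equiv.swap p k) = Bcode (τ * Equiv.swap p k) := by
        funext i
        rcases lt_trichotomy i k with h | h | h
        · rw [hp, bcode_swap_step σ k i h, hpq, bcode_swap_step τ k i h, hB]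
        · rw [h, bcode_of_fixed _ k (hσ'fix k (by omega)),
              bcode_of_fixed _ k (hτ'fix k (by omega))]
        · have h1 : m ≤ (i:ℕ) := by rw [Fin.lt_def] at h; omega
          rw [bcode_of_fixed _ i (hσ'fix i h1), bcode_of_fixed _ i (hτ'fix i h1)]
      have heq : σ * Equiv.swap p k = τ * Equiv.swap p k := ih _ _ hσ'fix hτ'fix hB'
      exact mul_right_cancel heq
    · push_neg at hmn
      apply ih σ τ
      · intro j hj; exact absurd (lt_of_lt_of_le j.isLt hmn) (by omega)
      · intro j hj; exact absurd (lt_of_lt_of_le j.isLt hmn) (by omega)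
      · exact hB

lemma bcode_injective : Function.Injective (Bcode (n := n)) := by
  intro σ τ h
  apply inj_aux n σ τ
  · intro j hj; exact absurd j.isLt (by omega)
  · intro j hj; exact absurd j.isLt (by omega)
  · exact h

lemma bcodeNat_injective : Function.Injective (BcodeNat (n := n)) := by
  intro σ τ h
  apply bcode_injective
  funext i
  have := congrFun h i
  simp only [BcodeNat] at this
  exact Fin.ext (by omega)

end SortIdx
namespace SortIdx

open Finset

variable {n : ℕ}

noncomputable section
open scoped Classical

/-- The set of codes. -/
def LFin (n : ℕ) : Finset (Fin n → ℕ) :=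
  Fintype.piFinset (fun i => Finset.Icc 1 ((i:ℕ)+1))

lemma card_LFin : (LFin n).card = Nat.factorial n := by
  rw [LFin, Fintype.card_piFinset]
  have h1 : ∀ i : Fin n, (Finset.Icc 1 ((i:ℕ)+1)).card = (i:ℕ)+1 := by
    intro i; rw [Nat.card_Icc]; omega
  rw [Finset.prod_congr rfl (fun i _ => h1 i)]
  induction n with
  | zero => simp
  | succ m ih => rw [Fin.prod_univ_castSucc]; simp [ih, Nat.factorial_succ, Nat.mul_comm]

lemma bcodeNat_mem_LFin (σ : Equiv.Perm (Fin n)) : BcodeNat σ ∈ LFin n := by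
  rw [LFin, Fintype.mem_piFinset]
  intro i
  rw [Finset.mem_Icc]
  have := bcode_le σ i
  rw [Fin.le_def] at this
  simp only [BcodeNat]
  omega

lemma acode_mem_LFin (σ : Equiv.Perm (Fin n)) : Acode σ ∈ LFin n := by
  rw [LFin, Fintype.mem_piFinset]
  intro i
  rw [Finset.mem_Icc]
  constructor
  · have : i ∈ Finset.univ.filter (fun j => j ≤ i ∧ σ⁻¹ j ≤ σ⁻¹ i) := by
      simp
    have h2 := Finset.card_pos.mpr ⟨i, this⟩
    exact h2
  · have hsub : Finset.univ.filter (fun j => j ≤ i ∧ σ⁻¹ j ≤ σ⁻¹ i) ⊆ Finset.Iic i := by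
      intro j hj
      rw [Finset.mem_filter] at hj
      rw [Finset.mem_Iic]
      exact hj.2.1
    have := Finset.card_le_card hsub
    rw [Fin.card_Iic] at this
    exact this

lemma bcodeNat_surj_LFin (c : Fin n → ℕ) (hc : c ∈ LFin n) :
    ∃ τ : Equiv.Perm (Fin n), BcodeNat τ = c := by
  have himg : (Finset.univ.image (BcodeNat (n := n))) = LFin n := by
    apply Finset.eq_of_subset_of_card_le
    · intro x hx
      rw [Finset.mem_image] at hx
      obtain ⟨σ, _, rfl⟩ := hx
      exact bcodeNat_mem_LFin σ
    · rw [card_LFin, Finset.card_image_of_injective _ bcodeNat_injective,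
        Finset.card_univ, Fintype.card_perm, Fintype.card_fin]
  rw [← himg, Finset.mem_image] at hc
  obtain ⟨τ, _, hτ⟩ := hc
  exact ⟨τ, hτ⟩

lemma bcodeNat_phi (σ : Equiv.Perm (Fin n)) : BcodeNat (phi σ) = Acode σ := by
  obtain ⟨τ, hτ⟩ := bcodeNat_surj_LFin (Acode σ) (acode_mem_LFin σ)
  exact Function.invFun_eq ⟨τ, hτ⟩

end

end SortIdx
namespace SortIdx

open Finset

variable {n : ℕ}

lemma pow_mul_self_apply (τ : Equiv.Perm (Fin n)) (K q : ℕ) (i : Fin n) (h : (τ ^ K) i = i) :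
    (τ ^ (K * q)) i = i := by
  induction q with
  | zero => simp
  | succ q ih =>
    rw [Nat.mul_succ, pow_add, Equiv.Perm.mul_apply, h, ih]

lemma mem_cycSet_iff (τ : Equiv.Perm (Fin n)) (i : Fin n) :
    i ∈ CycSet τ ↔ Bcode τ i = i := by
  rw [CycSet, Finset.mem_filter]
  simp only [Finset.mem_univ, true_and]
  obtain ⟨K, hKdef⟩ : ∃ K, K = Nat.find (bcode_exists τ i) := ⟨_, rfl⟩
  have hB : Bcode τ i = (τ⁻¹ ^ K) i := by rw [hKdef]; rfl
  have hK1 : 0 < K := by rw [hKdef]; exact (Nat.find_spec (bcode_exists τ i)).1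
  have hKle : (τ⁻¹ ^ K) i ≤ i := by
    have := (Nat.find_spec (bcode_exists τ i)).2
    rw [← hKdef] at this
    exact this
  have hKmin : ∀ j, 0 < j → j < K → ¬ (τ⁻¹ ^ j) i ≤ i := by
    intro j hj hjK hle
    rw [hKdef] at hjK
    exact Nat.find_min (bcode_exists τ i) hjK ⟨hj, hle⟩
  rw [hB]
  constructor
  · intro h
    obtain ⟨o, ho⟩ : ∃ o, o = orderOf τ := ⟨_, rfl⟩
    have ho1 : 0 < o := by rw [ho]; exact orderOf_pos τ
    obtain ⟨o', rfl⟩ : ∃ o', o = o' + 1 := ⟨o - 1, by omega⟩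
    have hone : τ ^ (K * o') * τ ^ K = 1 := by
      rw [← pow_add, show K * o' + K = (o' + 1) * K by ring, pow_mul, ho,
        pow_orderOf_eq_one, one_pow]
    have h2 : τ ^ (K * o') = (τ ^ K)⁻¹ := by
      rw [eq_inv_iff_mul_eq_one]; exact hone
    have h1 : (τ⁻¹ ^ K) i = (τ ^ (K * o')) i := by
      rw [inv_pow, ← h2]
    rw [h1]
    exact le_antisymm (h1 ▸ hKle) (h _)
  · intro h m
    have hτK : (τ ^ K) i = i := by
      have h' := h
      rw [inv_pow] at h'
      exact (Equiv.Perm.inv_eq_iff_eq.mp h').symm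
    obtain ⟨q, r, rfl, hrK⟩ : ∃ q r, m = K * q + r ∧ r < K :=
      ⟨m / K, m % K, (Nat.div_add_mod m K).symm, Nat.mod_lt _ hK1⟩
    rw [show K * q + r = r + K * q by omega, pow_add, Equiv.Perm.mul_apply,
      pow_mul_self_apply τ K q i hτK]
    rcases Nat.eq_zero_or_pos r with h0 | hpos
    · rw [h0]; simp
    · obtain ⟨d, hd⟩ : ∃ d, K = r + d := ⟨K - r, by omega⟩
      have hd1 : 0 < d := by omega
      have hmul : τ ^ r * τ⁻¹ ^ K = τ⁻¹ ^ d := by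
        rw [hd, pow_add, ← mul_assoc, inv_pow, mul_inv_cancel, one_mul, inv_pow]
      have heq : (τ ^ r) i = (τ⁻¹ ^ d) i := by
        have e1 : (τ ^ r) ((τ⁻¹ ^ K) i) = (τ ^ r) i := congrArg _ h
        rw [← Equiv.Perm.mul_apply, hmul] at e1
        exact e1.symm
      rw [heq]
      exact le_of_not_ge (hKmin d hd1 (by omega))

lemma mem_rmilSet_iff (σ : Equiv.Perm (Fin n)) (v : Fin n) :
    v ∈ RmilSet σ ↔ Acode σ v = (v:ℕ) + 1 := by
  rw [RmilSet, Finset.mem_image]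
  have h1 : (∃ i ∈ Finset.univ.filter (fun i => ∀ j, i < j → σ i < σ j), σ i = v) ↔
      (∀ j, σ⁻¹ v < j → v < σ j) := by
    constructor
    · rintro ⟨i, hi, rfl⟩
      rw [Finset.mem_filter] at hi
      simpa using hi.2
    · intro h
      refine ⟨σ⁻¹ v, ?_, by simp⟩
      simp only [Finset.mem_filter, Finset.mem_univ, true_and, SortIdx.perm_apply_inv_self]
      exact h
  rw [h1]
  have h2 : (∀ j, σ⁻¹ v < j → v < σ j) ↔ (∀ u, u ≤ v → σ⁻¹ u ≤ σ⁻¹ v) := by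
    constructor
    · intro h u hu
      by_contra hc
      push_neg at hc
      have := h (σ⁻¹ u) hc
      rw [SortIdx.perm_apply_inv_self] at this
      exact absurd hu (not_le.mpr this)
    · intro h j hj
      by_contra hc
      push_neg at hc
      have := h (σ j) hc
      rw [SortIdx.perm_inv_apply_self] at this
      exact absurd hj (not_lt.mpr this)
  rw [h2]
  unfold Acode Leh
  constructor
  · intro h
    have : Finset.univ.filter (fun j => j ≤ v ∧ σ⁻¹ j ≤ σ⁻¹ v) = Finset.Iic v := by
      ext j
      simp only [Finset.mem_filter, Finset.mem_univ, true_and, Finset.mem_Iic]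
      exact ⟨fun hh => hh.1, fun hh => ⟨hh, h j hh⟩⟩
    rw [this, Fin.card_Iic]
  · intro h
    have hsub : Finset.univ.filter (fun j => j ≤ v ∧ σ⁻¹ j ≤ σ⁻¹ v) ⊆ Finset.Iic v := by
      intro j hj
      rw [Finset.mem_filter] at hj
      exact Finset.mem_Iic.mpr hj.2.1
    have hcard : (Finset.Iic v).card ≤ (Finset.univ.filter (fun j => j ≤ v ∧ σ⁻¹ j ≤ σ⁻¹ v)).card := by
      rw [Fin.card_Iic, h]
    have heq := Finset.eq_of_subset_of_card_le hsub hcard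
    intro u hu
    have : u ∈ Finset.Iic v := Finset.mem_Iic.mpr hu
    rw [← heq, Finset.mem_filter] at this
    exact this.2.2

end SortIdx
namespace SortIdx

open Finset

variable {n : ℕ}

/-- number of letters whose inverse image is at most `x` -/
lemma count_inv_le (σ : Equiv.Perm (Fin n)) (x : Fin n) :
    (Finset.univ.filter (fun w => σ⁻¹ w ≤ x)).card = (x:ℕ) + 1 := by
  have himg : Finset.univ.filter (fun w => σ⁻¹ w ≤ x) = (Finset.Iic x).image σ := by
    ext w
    simp only [Finset.mem_filter, Finset.mem_univ, true_and, Finset.mem_image, Finset.mem_Iic]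
    constructor
    · intro h
      exact ⟨σ⁻¹ w, h, by simp⟩
    · rintro ⟨y, hy, rfl⟩
      simpa using hy
  rw [himg, Finset.card_image_of_injective _ (Equiv.injective σ), Fin.card_Iic]

lemma acode_of_min (σ : Equiv.Perm (Fin n)) (v : Fin n)
    (hR : ∀ u, v ≤ u → σ⁻¹ v ≤ σ⁻¹ u) : Acode σ v = (σ⁻¹ v : ℕ) + 1 := by
  unfold Acode Leh
  have hfe : Finset.univ.filter (fun j => j ≤ v ∧ σ⁻¹ j ≤ σ⁻¹ v) =
      Finset.univ.filter (fun j => σ⁻¹ j ≤ σ⁻¹ v) := by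
    ext j
    simp only [Finset.mem_filter, Finset.mem_univ, true_and]
    refine ⟨fun h => h.2, fun h => ⟨?_, h⟩⟩
    by_contra hc
    push_neg at hc
    have h2 := hR j (le_of_lt hc)
    have h3 : σ⁻¹ j = σ⁻¹ v := le_antisymm h h2
    have := Equiv.injective σ⁻¹ h3
    rw [this] at hc
    exact lt_irrefl _ hc
  rw [hfe, count_inv_le]

lemma lmap_iff_R (σ : Equiv.Perm (Fin n)) (i : Fin n) :
    i ∈ LmapSet σ ↔ ∀ u, σ i ≤ u → σ⁻¹ (σ i) ≤ σ⁻¹ u := by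
  rw [LmapSet, Finset.mem_filter]
  simp only [Finset.mem_univ, true_and, SortIdx.perm_inv_apply_self]
  constructor
  · intro h u hu
    by_contra hc
    push_neg at hc
    have h2 := h (σ⁻¹ u) hc
    rw [SortIdx.perm_apply_inv_self] at h2
    exact absurd hu (not_le.mpr h2)
  · intro hR j hj
    by_contra hc
    push_neg at hc
    have h2 := hR (σ j) hc
    rw [SortIdx.perm_inv_apply_self] at h2
    exact absurd hj (not_lt.mpr h2)

lemma acode_min_of_R (σ : Equiv.Perm (Fin n)) (v : Fin n)
    (hR : ∀ u, v ≤ u → σ⁻¹ v ≤ σ⁻¹ u) : ∀ u, v ≤ u → Acode σ v ≤ Acode σ u := by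
  intro u hvu
  rw [acode_of_min σ v hR]
  show (σ⁻¹ v : ℕ) + 1 ≤ (Finset.univ.filter (fun j => j ≤ u ∧ σ⁻¹ j ≤ σ⁻¹ u)).card
  rw [← count_inv_le σ (σ⁻¹ v)]
  apply Finset.card_le_card
  intro w hw
  rw [Finset.mem_filter] at hw ⊢
  obtain ⟨-, hw⟩ := hw
  have hwv : w ≤ v := by
    by_contra hc
    push_neg at hc
    have h2 := hR w (le_of_lt hc)
    have h3 := Equiv.injective σ⁻¹ (le_antisymm hw h2)
    rw [h3] at hc
    exact lt_irrefl _ hc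
  exact ⟨Finset.mem_univ w, le_trans hwv hvu, le_trans hw (hR u hvu)⟩

lemma exists_R_of_acode_min (σ : Equiv.Perm (Fin n)) (v : Fin n)
    (hmono : ∀ u, v ≤ u → Acode σ v ≤ Acode σ u) :
    ∃ w, (∀ u, w ≤ u → σ⁻¹ w ≤ σ⁻¹ u) ∧ Acode σ w = Acode σ v := by
  have hne : (Finset.univ.filter (fun w : Fin n => v ≤ w)).Nonempty := ⟨v, by simp⟩
  obtain ⟨u, hu, humin⟩ := Finset.exists_min_image _ (fun w => σ⁻¹ w) hne
  rw [Finset.mem_filter] at hu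
  have hvu : v ≤ u := hu.2
  have hRu : ∀ w, u ≤ w → σ⁻¹ u ≤ σ⁻¹ w := by
    intro w hw
    exact humin w (by simp [le_trans hvu hw])
  refine ⟨u, hRu, ?_⟩
  have hle : Acode σ u ≤ Acode σ v := by
    unfold Acode Leh
    apply Finset.card_le_card_of_injOn (fun x => if x = u then v else x)
    · intro x hx
      simp only [Finset.mem_coe] at hx ⊢
      rw [Finset.mem_filter] at hx
      obtain ⟨-, hxu, hπx⟩ := hx
      by_cases hxu' : x = u
      · subst hxu'
        rw [if_pos rfl, Finset.mem_filter]
        exact ⟨Finset.mem_univ v, le_refl v, le_refl _⟩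
      · rw [if_neg hxu', Finset.mem_filter]
        have hπuv : σ⁻¹ u ≤ σ⁻¹ v := humin v (by simp)
        have hxv : x ≤ v := by
          by_contra hc
          push_neg at hc
          have h2 := humin x (by simp [le_of_lt hc])
          have h3 := Equiv.injective σ⁻¹ (le_antisymm hπx h2)
          exact hxu' h3
        exact ⟨Finset.mem_univ x, hxv, le_trans hπx hπuv⟩
    · intro x hx y hy hxy
      dsimp only at hxy
      simp only [Finset.coe_filter, Set.mem_setOf_eq] at hx hy
      by_cases hx' : x = u <;> by_cases hy' : y = u
      · rw [hx', hy']
      · exfalso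
        subst hx'
        rw [if_pos rfl, if_neg hy'] at hxy
        have hπuv : σ⁻¹ x ≤ σ⁻¹ v := humin v (by simp)
        have h5 : σ⁻¹ v ≤ σ⁻¹ x := by rw [hxy]; exact hy.2.2
        have h6 : x = v := Equiv.injective σ⁻¹ (le_antisymm hπuv h5)
        apply hy'
        rw [← hxy]
        exact h6.symm
      · exfalso
        subst hy'
        rw [if_neg hx', if_pos rfl] at hxy
        have hπuv : σ⁻¹ y ≤ σ⁻¹ v := humin v (by simp)
        have h5 : σ⁻¹ v ≤ σ⁻¹ y := by rw [← hxy]; exact hx.2.2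
        have h6 : y = v := Equiv.injective σ⁻¹ (le_antisymm hπuv h5)
        apply hx'
        rw [hxy]
        exact h6.symm
      · simpa [if_neg hx', if_neg hy'] using hxy
  exact le_antisymm hle (hmono u hvu)

lemma mem_lmapSet_iff_acode (σ : Equiv.Perm (Fin n)) (i : Fin n) :
    i ∈ LmapSet σ ↔
      ∃ v : Fin n, ((i:ℕ) + 1 = Acode σ v) ∧ ∀ u, v ≤ u → Acode σ v ≤ Acode σ u := by
  constructor
  · intro h
    rw [lmap_iff_R] at h
    refine ⟨σ i, ?_, acode_min_of_R σ (σ i) h⟩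
    rw [acode_of_min σ (σ i) h, SortIdx.perm_inv_apply_self]
  · rintro ⟨v, hval, hmono⟩
    obtain ⟨w, hRw, hcw⟩ := exists_R_of_acode_min σ v hmono
    have h1 : Acode σ w = (σ⁻¹ w : ℕ) + 1 := acode_of_min σ w hRw
    have h2 : (σ⁻¹ w : ℕ) = (i:ℕ) := by
      have := hcw.trans hval.symm
      rw [h1] at this
      omega
    have h3 : σ⁻¹ w = i := Fin.ext h2
    have h4 : σ i = w := by rw [← h3, SortIdx.perm_apply_inv_self]
    rw [lmap_iff_R, h4]
    exact hRw

end SortIdx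
namespace SortIdx

open Finset

variable {n : ℕ}

lemma mem_lmapSet (τ : Equiv.Perm (Fin n)) (i : Fin n) :
    i ∈ LmapSet τ ↔ ∀ j, j < i → τ j < τ i := by
  rw [LmapSet, Finset.mem_filter]
  simp

lemma lmapB_aux (m : ℕ) : ∀ τ : Equiv.Perm (Fin n),
    (∀ j : Fin n, m ≤ (j:ℕ) → τ j = j) → ∀ i : Fin n,
    (i ∈ LmapSet τ ↔ ∃ v, Bcode τ v = i ∧ ∀ u, v ≤ u → Bcode τ v ≤ Bcode τ u) := by
  induction m with
  | zero =>
    intro τ hτ i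
    have h1 : τ = 1 := Equiv.ext fun j => hτ j (Nat.zero_le _)
    subst h1
    rw [mem_lmapSet]
    constructor
    · intro _
      refine ⟨i, bcode_of_fixed 1 i rfl, fun u hu => ?_⟩
      rw [bcode_of_fixed 1 i rfl, bcode_of_fixed 1 u rfl]
      exact hu
    · intro _ j hj
      simpa using hj
  | succ m ih =>
    intro τ hτ i
    by_cases hmn : m < n
    on_goal 2 =>
      push_neg at hmn
      exact ih τ (fun j hj => absurd (lt_of_lt_of_le j.isLt hmn) (by omega)) i
    obtain ⟨k, hkm⟩ : ∃ k : Fin n, (k:ℕ) = m := ⟨⟨m, hmn⟩, rfl⟩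
    have hfixgt : ∀ j : Fin n, k < j → τ j = j := by
      intro j hj
      rw [Fin.lt_def] at hj
      exact hτ j (by omega)
    have hτkle : (τ⁻¹ k : ℕ) ≤ m := by
      by_contra h
      push_neg at h
      have h1 := hτ (τ⁻¹ k) h
      rw [SortIdx.perm_apply_inv_self] at h1
      rw [← h1] at h
      omega
    obtain ⟨p, hp⟩ : ∃ p : Fin n, p = τ⁻¹ k := ⟨_, rfl⟩
    have hpm : (p:ℕ) ≤ m := by rw [hp]; exact hτkle
    have hpk : p ≤ k := by rw [Fin.le_def]; omega
    have hτp : τ p = k := by rw [hp, SortIdx.perm_apply_inv_self]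
    have hbk : Bcode τ k = p := by
      rw [hp]
      exact bcode_of_inv_le τ k (by rw [Fin.le_def]; omega)
    have hbig : ∀ j, k < j → Bcode τ j = j := fun j hj => bcode_of_fixed τ j (hfixgt j hj)
    have hτsmall : ∀ j, j ≤ k → τ j ≤ k := by
      intro j hj
      by_contra h
      push_neg at h
      have h1 := hfixgt (τ j) h
      have h2 : τ j = j := Equiv.injective τ h1
      rw [h2] at h
      exact absurd hj (not_le.mpr h)
    rcases eq_or_lt_of_le hpk with rfl | hplt
    · -- p = k : τ fixes k as well, apply ih directly
      have hτk : τ p = p := hτp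
      apply ih τ
      intro j hj
      rcases eq_or_ne j p with rfl | hne
      · exact hτk
      · have : (j:ℕ) ≠ m := fun he => hne (Fin.ext (by omega))
        exact hτ j (by omega)
    · -- p < k
      have hτklt : τ k < k := by
        rcases eq_or_lt_of_le (hτsmall k (le_refl k)) with he | h
        · exfalso
          have : τ⁻¹ k = k := by rw [Equiv.Perm.inv_eq_iff_eq]; exact he.symm
          rw [← hp] at this
          exact absurd this (ne_of_lt hplt)
        · exact h
      obtain ⟨τ', hτ'⟩ : ∃ τ', τ' = τ * Equiv.swap p k := ⟨_, rfl⟩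
      have hτ'k : τ' k = k := by
        rw [hτ', Equiv.Perm.mul_apply, Equiv.swap_apply_right, hτp]
      have hτ'ne : ∀ x, x ≠ p → x ≠ k → τ' x = τ x := by
        intro x h1 h2
        rw [hτ', Equiv.Perm.mul_apply, Equiv.swap_apply_of_ne_of_ne h1 h2]
      have hτ'fix : ∀ j : Fin n, m ≤ (j:ℕ) → τ' j = j := by
        intro j hj
        rcases eq_or_ne j k with rfl | hne
        · exact hτ'k
        · have hkj : k < j := by
            rw [Fin.lt_def]
            rcases Nat.eq_or_lt_of_le hj with h | h
            · exact absurd (Fin.ext (by omega) : j = k) hne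
            · omega
          have hjp : j ≠ p := fun he => by
            rw [he] at hkj
            exact absurd hkj (not_lt.mpr (le_of_lt hplt))
          rw [hτ'ne j hjp hne]
          exact hfixgt j hkj
      have IH' := ih τ' hτ'fix
      have hb'small : ∀ x : Fin n, x < k → Bcode τ' x = Bcode τ x := by
        intro x hx
        rw [hτ', hp]
        exact bcode_swap_step τ k x hx
      have hb'k : Bcode τ' k = k := bcode_of_fixed τ' k hτ'k
      have hb'big : ∀ j, k < j → Bcode τ' j = j := by
        intro j hj
        rw [Fin.lt_def] at hj
        exact bcode_of_fixed τ' j (hτ'fix j (by omega))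
      rcases lt_trichotomy k i with hki | rfl | hik
      · -- k < i : both sides true
        apply iff_of_true
        · rw [mem_lmapSet]
          intro j hj
          rw [hfixgt i hki]
          rcases le_or_gt j k with h | h
          · exact lt_of_le_of_lt (hτsmall j h) hki
          · rw [hfixgt j h]; exact hj
        · refine ⟨i, hbig i hki, fun u hu => ?_⟩
          rw [hbig i hki, hbig u (lt_of_lt_of_le hki hu)]
          exact hu
      · -- i = k : both sides false
        apply iff_of_false
        · rw [mem_lmapSet]
          push_neg
          exact ⟨p, hplt, by rw [hτp]; exact le_of_lt hτklt⟩
        · rintro ⟨v, hv, -⟩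
          rcases lt_trichotomy v k with h | rfl | h
          · exact absurd (hv ▸ bcode_le τ v : k ≤ v) (not_le.mpr h)
          · rw [hbk] at hv
            exact absurd hv (ne_of_lt hplt)
          · rw [hbig v h] at hv
            exact absurd hv (ne_of_gt h)
      · rcases lt_trichotomy p i with hpi | rfl | hip
        · -- p < i < k : both sides false
          apply iff_of_false
          · rw [mem_lmapSet]
            push_neg
            refine ⟨p, hpi, ?_⟩
            rw [hτp]
            rcases eq_or_lt_of_le (hτsmall i (le_of_lt hik)) with he | h
            · exfalso
              have : τ⁻¹ k = i := by rw [Equiv.Perm.inv_eq_iff_eq]; exact he.symm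
              rw [← hp] at this
              exact absurd this.symm (ne_of_gt hpi)
            · exact le_of_lt h
          · rintro ⟨v, hv, hmin⟩
            have hiv : i ≤ v := hv ▸ bcode_le τ v
            rcases lt_trichotomy v k with h | rfl | h
            · have := hmin k (le_of_lt h)
              rw [hv, hbk] at this
              exact absurd this (not_le.mpr hpi)
            · rw [hbk] at hv
              exact absurd hv.symm (ne_of_gt hpi)
            · rw [hbig v h] at hv
              exact absurd hv (ne_of_gt (lt_trans hik h))
        · -- i = p : both sides true
          apply iff_of_true
          · rw [mem_lmapSet]
            intro j hj
            rw [hτp]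
            rcases eq_or_lt_of_le (hτsmall j (le_of_lt (lt_trans hj hik))) with he | h
            · exfalso
              have : τ⁻¹ k = j := by rw [Equiv.Perm.inv_eq_iff_eq]; exact he.symm
              rw [← hp] at this
              exact absurd this.symm (ne_of_lt hj)
            · exact h
          · refine ⟨k, hbk, fun u hu => ?_⟩
            rw [hbk]
            rcases eq_or_lt_of_le hu with rfl | h
            · rw [hbk]
            · rw [hbig u h]
              exact le_of_lt (lt_trans hplt h)
        · -- i < p : transfer to τ' via IH'
          have hipk : i < k := lt_trans hip hplt
          have hlhs : (i ∈ LmapSet τ ↔ i ∈ LmapSet τ') := by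
            rw [mem_lmapSet, mem_lmapSet]
            have hsame : ∀ x : Fin n, x ≤ i → τ' x = τ x := by
              intro x hx
              have h1 : x ≠ p := ne_of_lt (lt_of_le_of_lt hx hip)
              have h2 : x ≠ k := ne_of_lt (lt_of_le_of_lt hx hipk)
              exact hτ'ne x h1 h2
            constructor
            · intro h j hj
              rw [hsame j (le_of_lt hj), hsame i (le_refl i)]
              exact h j hj
            · intro h j hj
              rw [← hsame j (le_of_lt hj), ← hsame i (le_refl i)]
              exact h j hj
          have hrhs : (∃ v, Bcode τ v = i ∧ ∀ u, v ≤ u → Bcode τ v ≤ Bcode τ u) ↔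
              (∃ v, Bcode τ' v = i ∧ ∀ u, v ≤ u → Bcode τ' v ≤ Bcode τ' u) := by
            constructor
            · rintro ⟨v, hv, hmin⟩
              have hvk : v < k := by
                rcases lt_trichotomy v k with h | rfl | h
                · exact h
                · rw [hbk] at hv
                  exact absurd hv.symm (ne_of_lt hip)
                · rw [hbig v h] at hv
                  exact absurd hv (ne_of_gt (lt_trans hipk h))
              refine ⟨v, by rw [hb'small v hvk]; exact hv, fun u hu => ?_⟩
              rw [hb'small v hvk, hv]
              rcases lt_trichotomy u k with h | rfl | h
              · rw [hb'small u h, ← hv]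
                exact hmin u hu
              · rw [hb'k]
                exact le_of_lt hipk
              · rw [hb'big u h]
                exact le_of_lt (lt_trans hipk h)
            · rintro ⟨v, hv, hmin⟩
              have hvk : v < k := by
                rcases lt_trichotomy v k with h | rfl | h
                · exact h
                · rw [hb'k] at hv
                  exact absurd hv (ne_of_gt hipk)
                · rw [hb'big v h] at hv
                  exact absurd hv (ne_of_gt (lt_trans hipk h))
              rw [hb'small v hvk] at hv
              refine ⟨v, hv, fun u hu => ?_⟩
              rw [hv]
              rcases lt_trichotomy u k with h | rfl | h
              · have := hmin u hu
                rw [hb'small v hvk, hb'small u h, hv] at this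
                exact this
              · rw [hbk]
                exact le_of_lt hip
              · rw [hbig u h]
                exact le_of_lt (lt_trans hipk h)
          rw [hlhs, hrhs]
          exact IH' i

lemma mem_lmapSet_iff_bcode (τ : Equiv.Perm (Fin n)) (i : Fin n) :
    i ∈ LmapSet τ ↔ ∃ v, Bcode τ v = i ∧ ∀ u, v ≤ u → Bcode τ v ≤ Bcode τ u :=
  lmapB_aux n τ (fun j hj => absurd j.isLt (by omega)) i

end SortIdx
/-- Foata–Han.  `(Rmil, Lmap) σ = (Cyc, Lmap) (φ σ)`. -/
theorem rmil_lmap_eq_cyc_lmap_phi (n : ℕ) (σ : Equiv.Perm (Fin n)) :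
    SortIdx.RmilSet σ = SortIdx.CycSet (SortIdx.phi σ) ∧
    SortIdx.LmapSet σ = SortIdx.LmapSet (SortIdx.phi σ) := by
  have hphi := SortIdx.bcodeNat_phi σ
  constructor
  · ext i
    rw [SortIdx.mem_rmilSet_iff, SortIdx.mem_cycSet_iff]
    have h1 := congrFun hphi i
    simp only [SortIdx.BcodeNat] at h1
    rw [← h1]
    constructor
    · intro h
      exact Fin.ext (by omega)
    · intro h
      rw [h]
  · ext i
    rw [SortIdx.mem_lmapSet_iff_acode, SortIdx.mem_lmapSet_iff_bcode]
    constructor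
    · rintro ⟨v, hval, hmin⟩
      have h1 := congrFun hphi v
      simp only [SortIdx.BcodeNat] at h1
      refine ⟨v, Fin.ext (by omega), ?_⟩
      intro u hu
      have h2 := congrFun hphi u
      simp only [SortIdx.BcodeNat] at h2
      have h3 := hmin u hu
      rw [Fin.le_def]
      omega
    · rintro ⟨v, hval, hmin⟩
      have h1 := congrFun hphi v
      simp only [SortIdx.BcodeNat] at h1
      have h4 : (SortIdx.Bcode (SortIdx.phi σ) v : ℕ) = (i:ℕ) := congrArg Fin.val hval
      refine ⟨v, by omega, ?_⟩
      intro u hu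
      have h2 := congrFun hphi u
      simp only [SortIdx.BcodeNat] at h2
      have h3 := hmin u hu
      rw [Fin.le_def] at h3
      omega
end

section
/- For all subsets S, T ⊆ [n], the three counts #{σ ∈ S_n : Cyc(σ)=S and Rmil(σ)=T}, #{σ ∈ S_n : Cyc(σ)=S and Lmap(σ)=T}, #{σ ∈ S_n : Rmil(σ)=S and Lmap(σ)=T} are all equal; moreover each of these pairs of statistics is symmetric, e.g. #{σ : Cyc(σ)=S, Rmil(σ)=T} = #{σ : Cyc(σ)=T, Rmil(σ)=S}, and similarly for (Cyc, Lmap) and (Rmil, Lmap). -/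
open scoped Classical

theorem Equiv.Perm.inv_apply_self {α : Type*} (f : Equiv.Perm α) (x : α) : f⁻¹ (f x) = x :=
  f.symm_apply_apply x

theorem Equiv.Perm.apply_inv_self {α : Type*} (f : Equiv.Perm α) (x : α) : f (f⁻¹ x) = x :=
  f.apply_symm_apply x

namespace FH

open Equiv Finset Fin SortIdx

noncomputable section

variable {n : ℕ}

/-! ### Membership lemmas -/

lemma mem_RmilSet {σ : Equiv.Perm (Fin n)} {v : Fin n} :
    v ∈ RmilSet σ ↔ ∀ j, σ⁻¹ v < j → v < σ j := by
  simp only [RmilSet, Finset.mem_image, Finset.mem_filter, Finset.mem_univ, true_and]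
  constructor
  · rintro ⟨i, hi, rfl⟩ j hj
    rw [Perm.inv_apply_self] at hj
    exact hi j hj
  · intro h
    refine ⟨σ⁻¹ v, fun j hj => ?_, Perm.apply_inv_self σ v⟩
    rw [Perm.apply_inv_self]
    exact h j hj

lemma mem_LmapSet {σ : Equiv.Perm (Fin n)} {i : Fin n} :
    i ∈ LmapSet σ ↔ ∀ j, j < i → σ j < σ i := by
  simp [LmapSet]

lemma mem_CycSet {σ : Equiv.Perm (Fin n)} {i : Fin n} :
    i ∈ CycSet σ ↔ ∀ k : ℕ, i ≤ (σ ^ k) i := by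
  simp [CycSet]

/-! ### Behaviour under inverse -/

lemma le_inv_pow_of_le_pow {σ : Equiv.Perm (Fin n)} {i : Fin n}
    (h : ∀ k : ℕ, i ≤ (σ ^ k) i) (k : ℕ) : i ≤ (σ⁻¹ ^ k) i := by
  have h1 : σ⁻¹ ^ k = (σ ^ k) ^ (orderOf (σ ^ k) - 1) := by
    have ho : 0 < orderOf (σ ^ k) := orderOf_pos _
    have h2 : (σ ^ k) ^ (orderOf (σ ^ k) - 1) * (σ ^ k) = 1 := by
      rw [← pow_succ, Nat.sub_add_cancel ho, pow_orderOf_eq_one]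
    rw [inv_pow]
    exact (eq_inv_of_mul_eq_one_left h2).symm
  rw [h1, ← pow_mul]
  exact h _

lemma cycSet_inv (σ : Equiv.Perm (Fin n)) : CycSet σ⁻¹ = CycSet σ := by
  ext i
  simp only [mem_CycSet]
  constructor
  · intro h k
    have := le_inv_pow_of_le_pow (σ := σ⁻¹) h k
    rwa [inv_inv] at this
  · exact le_inv_pow_of_le_pow

lemma rmilSet_inv (σ : Equiv.Perm (Fin n)) : RmilSet σ⁻¹ = LmapSet σ := by
  ext v
  rw [mem_RmilSet, mem_LmapSet, inv_inv]
  constructor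
  · intro h u hu
    rcases lt_trichotomy (σ u) (σ v) with hlt | heq | hgt
    · exact hlt
    · exact absurd (σ.injective heq) (ne_of_lt hu)
    · have h2 := h (σ u) hgt
      rw [Perm.inv_apply_self] at h2
      exact absurd hu (not_lt.mpr h2.le)
  · intro h j hj
    by_contra hc
    push_neg at hc
    rcases eq_or_lt_of_le hc with heq | hlt
    · have : j = σ v := by rw [← heq, Perm.apply_inv_self]
      rw [this] at hj
      exact lt_irrefl _ hj
    · have h2 := h _ hlt
      rw [Perm.apply_inv_self] at h2
      exact lt_irrefl _ (h2.trans hj)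

lemma lmapSet_inv (σ : Equiv.Perm (Fin n)) : LmapSet σ⁻¹ = RmilSet σ := by
  have h := rmilSet_inv σ⁻¹
  rw [inv_inv] at h
  exact h.symm

/-! ### Extension of a permutation fixing the last point -/

def extP (τ : Equiv.Perm (Fin n)) : Equiv.Perm (Fin (n + 1)) :=
  (finSuccEquivLast.symm.permCongr) τ.optionCongr

@[simp] lemma extP_castSucc (τ : Equiv.Perm (Fin n)) (j : Fin n) :
    extP τ (castSucc j) = castSucc (τ j) := by
  simp [extP, Equiv.permCongr_apply, finSuccEquivLast_castSucc, finSuccEquivLast_symm_some]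

@[simp] lemma extP_last (τ : Equiv.Perm (Fin n)) : extP τ (last n) = last n := by
  simp [extP, Equiv.permCongr_apply]

lemma extP_mul (τ₁ τ₂ : Equiv.Perm (Fin n)) : extP (τ₁ * τ₂) = extP τ₁ * extP τ₂ := by
  ext i
  cases i using Fin.lastCases with
  | last => simp [Perm.mul_apply]
  | cast j => simp [Perm.mul_apply]

lemma extP_pow (τ : Equiv.Perm (Fin n)) (k : ℕ) : extP (τ ^ k) = (extP τ) ^ k := by
  induction k with
  | zero =>
    ext i
    cases i using Fin.lastCases with
    | last => simp
    | cast j => simp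
  | succ k ih => rw [pow_succ, pow_succ, extP_mul, ih]

/-! ### The shift cycle `ρ p` -/

def rho (p : Fin (n + 1)) : Equiv.Perm (Fin (n + 1)) :=
  (finSuccEquiv' p).trans finSuccEquivLast.symm

@[simp] lemma rho_self (p : Fin (n + 1)) : rho p p = last n := by
  simp [rho, Equiv.trans_apply, finSuccEquiv'_at, finSuccEquivLast_symm_none]

@[simp] lemma rho_succAbove (p : Fin (n + 1)) (j : Fin n) :
    rho p (p.succAbove j) = castSucc j := by
  simp [rho, Equiv.trans_apply, finSuccEquiv'_succAbove, finSuccEquivLast_symm_some]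

/-! ### Restriction of a permutation fixing the last point -/

def res (σ : Equiv.Perm (Fin (n + 1))) (h : σ (last n) = last n) : Equiv.Perm (Fin n) where
  toFun j := (σ (castSucc j)).castPred (by
    intro hc
    have h2 : σ (castSucc j) = σ (last n) := by rw [hc, h]
    exact (Fin.castSucc_lt_last j).ne (σ.injective h2))
  invFun j := (σ⁻¹ (castSucc j)).castPred (by
    intro hc
    have h' : σ⁻¹ (last n) = last n := by
      apply σ.injective
      rw [Perm.apply_inv_self, h]
    have h2 : σ⁻¹ (castSucc j) = σ⁻¹ (last n) := by rw [hc, h']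
    exact (Fin.castSucc_lt_last j).ne ((σ⁻¹).injective h2))
  left_inv j := by
    apply Fin.castSucc_injective
    simp only [Fin.castSucc_castPred, Perm.inv_apply_self]
  right_inv j := by
    apply Fin.castSucc_injective
    simp only [Fin.castSucc_castPred, Perm.apply_inv_self]

lemma castSucc_res (σ : Equiv.Perm (Fin (n + 1))) (h : σ (last n) = last n) (j : Fin n) :
    castSucc (res σ h j) = σ (castSucc j) := by
  have hne : σ (castSucc j) ≠ last n := by
    intro hc
    have h2 : σ (castSucc j) = σ (last n) := by rw [hc, h]
    exact (Fin.castSucc_lt_last j).ne (σ.injective h2)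
  have hr : res σ h j = (σ (castSucc j)).castPred hne := rfl
  rw [hr, Fin.castSucc_castPred]

lemma extP_res (σ : Equiv.Perm (Fin (n + 1))) (h : σ (last n) = last n) :
    extP (res σ h) = σ := by
  ext i
  cases i using Fin.lastCases with
  | last => rw [extP_last, h]
  | cast j => rw [extP_castSucc, castSucc_res]

/-! ### The generic insertion equivalence -/

def insEquiv (ζ : Fin (n + 1) → Equiv.Perm (Fin (n + 1))) (hζ : ∀ p, ζ p p = last n) :
    Fin (n + 1) × Equiv.Perm (Fin n) ≃ Equiv.Perm (Fin (n + 1)) :=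
  Equiv.ofBijective (fun x => extP x.2 * ζ x.1) (by
    have aux : ∀ (p : Fin (n + 1)) (τ : Equiv.Perm (Fin n)), (extP τ * ζ p) p = last n := by
      intro p τ
      rw [Perm.mul_apply, hζ p, extP_last]
    constructor
    · rintro ⟨p₁, τ₁⟩ ⟨p₂, τ₂⟩ hEq
      simp only at hEq
      have hp : p₁ = p₂ := by
        have h1 : (extP τ₂ * ζ p₂) p₁ = last n := by rw [← hEq]; exact aux p₁ τ₁
        have h2 : (extP τ₂ * ζ p₂) p₂ = last n := aux p₂ τ₂
        exact (extP τ₂ * ζ p₂).injective (h1.trans h2.symm)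
      subst hp
      have hτe : extP τ₁ = extP τ₂ := mul_right_cancel hEq
      have hτ : τ₁ = τ₂ := by
        apply Equiv.ext
        intro j
        have h2 : extP τ₁ (castSucc j) = extP τ₂ (castSucc j) := by rw [hτe]
        rw [extP_castSucc, extP_castSucc] at h2
        exact Fin.castSucc_injective n h2
      rw [hτ]
    · intro σ
      set p := σ⁻¹ (last n) with hpdef
      have h1 : (ζ p)⁻¹ (last n) = p := by
        conv_lhs => rw [← hζ p]
        rw [Perm.inv_apply_self]
      have hfix : (σ * (ζ p)⁻¹) (last n) = last n := by
        rw [Perm.mul_apply, h1, hpdef, Perm.apply_inv_self]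
      refine ⟨(p, res _ hfix), ?_⟩
      simp only
      rw [extP_res _ hfix, inv_mul_cancel_right])

lemma insEquiv_apply (ζ : Fin (n + 1) → Equiv.Perm (Fin (n + 1))) (hζ : ∀ p, ζ p p = last n)
    (p : Fin (n + 1)) (τ : Equiv.Perm (Fin n)) :
    insEquiv ζ hζ (p, τ) = extP τ * ζ p := rfl

/-! ### Lmap of an insertion -/

lemma lmapSet_insert (σ : Equiv.Perm (Fin (n + 1))) (p : Fin (n + 1)) (τ : Equiv.Perm (Fin n))
    (hp : σ p = last n)
    (hlt : ∀ j : Fin n, castSucc j < p → σ (castSucc j) = castSucc (τ j)) :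
    LmapSet σ = ((LmapSet τ).filter (fun j => castSucc j < p)).image castSucc ∪ {p} := by
  ext i
  simp only [Finset.mem_union, Finset.mem_image, Finset.mem_filter, Finset.mem_singleton,
    mem_LmapSet]
  constructor
  · intro h
    rcases lt_trichotomy i p with hip | heq | hpi
    · left
      have hiL : i ≠ last n := ne_of_lt (lt_of_lt_of_le hip (Fin.le_last p))
      refine ⟨i.castPred hiL, ⟨?_, ?_⟩, Fin.castSucc_castPred i hiL⟩
      · intro j' hj'
        have hcs : castSucc j' < i := by
          rw [← Fin.castSucc_castPred i hiL]
          exact Fin.castSucc_lt_castSucc_iff.mpr hj'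
        have h2 := h _ hcs
        rw [hlt j' (hcs.trans hip)] at h2
        have h3 : σ i = castSucc (τ (i.castPred hiL)) := by
          have h4 := hlt (i.castPred hiL) (by rw [Fin.castSucc_castPred]; exact hip)
          rwa [Fin.castSucc_castPred] at h4
        rw [h3] at h2
        exact Fin.castSucc_lt_castSucc_iff.mp h2
      · rwa [Fin.castSucc_castPred]
    · right; exact heq
    · exfalso
      have h2 := h p hpi
      rw [hp] at h2
      exact absurd (Fin.le_last (σ i)) (not_le.mpr h2)
  · intro h
    rcases h with ⟨j, ⟨hjm, hjp⟩, rfl⟩ | rfl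
    · intro i' hi'
      have hi'p : i' < p := hi'.trans hjp
      have hi'L : i' ≠ last n := ne_of_lt (lt_of_lt_of_le hi'p (Fin.le_last _))
      have e1 : σ i' = castSucc (τ (i'.castPred hi'L)) := by
        have h4 := hlt (i'.castPred hi'L) (by rw [Fin.castSucc_castPred]; exact hi'p)
        rwa [Fin.castSucc_castPred] at h4
      rw [e1, hlt j hjp]
      apply Fin.castSucc_lt_castSucc_iff.mpr
      apply hjm
      apply Fin.castSucc_lt_castSucc_iff.mp
      rw [Fin.castSucc_castPred]
      exact hi'
    · intro i' hi'
      rw [hp]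
      have hi'L : i' ≠ last n := ne_of_lt (lt_of_lt_of_le hi' (Fin.le_last _))
      have e1 : σ i' = castSucc (τ (i'.castPred hi'L)) := by
        have h4 := hlt (i'.castPred hi'L) (by rw [Fin.castSucc_castPred]; exact hi')
        rwa [Fin.castSucc_castPred] at h4
      rw [e1]
      exact Fin.castSucc_lt_last _


/-! ### Rmil of the place-insertion -/

lemma rmilSet_insR (p : Fin (n + 1)) (τ : Equiv.Perm (Fin n)) :
    RmilSet (extP τ * rho p) =
      (RmilSet τ).image castSucc ∪ (if p = last n then {last n} else ∅) := by
  set σ := extP τ * rho p with hσ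
  have hp : σ p = last n := by rw [hσ, Perm.mul_apply, rho_self, extP_last]
  have hsa : ∀ j, σ (p.succAbove j) = castSucc (τ j) := by
    intro j
    rw [hσ, Perm.mul_apply, rho_succAbove, extP_castSucc]
  ext v
  cases v using Fin.lastCases with
  | last =>
    have hinv : σ⁻¹ (last n) = p := by rw [← hp, Perm.inv_apply_self]
    rw [mem_RmilSet, hinv]
    simp only [Finset.mem_union, Finset.mem_image]
    constructor
    · intro h
      right
      have hpl : p = last n := by
        by_contra hc
        have h2 := h (last n) (Fin.lt_last_iff_ne_last.mpr hc)
        exact absurd (Fin.le_last (σ (last n))) (not_le.mpr h2)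
      rw [if_pos hpl]
      exact Finset.mem_singleton_self _
    · intro h j hj
      rcases h with ⟨u, _, hu⟩ | h
      · exact absurd hu (Fin.castSucc_lt_last u).ne
      · by_cases hpl : p = last n
        · rw [hpl] at hj
          exact absurd hj (not_lt.mpr (Fin.le_last j))
        · rw [if_neg hpl] at h
          exact absurd h (Finset.notMem_empty _)
  | cast u =>
    have hinvv : σ⁻¹ (castSucc u) = p.succAbove (τ⁻¹ u) := by
      have h2 := hsa (τ⁻¹ u)
      rw [Perm.apply_inv_self] at h2
      rw [← h2, Perm.inv_apply_self]
    rw [mem_RmilSet, hinvv]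
    have hRHS : castSucc u ∈ (RmilSet τ).image castSucc ∪
        (if p = last n then {last n} else ∅) ↔ u ∈ RmilSet τ := by
      simp only [Finset.mem_union, Finset.mem_image]
      constructor
      · intro h
        rcases h with ⟨w, hw, hwe⟩ | h
        · rwa [← Fin.castSucc_injective n hwe]
        · exfalso
          by_cases hpl : p = last n
          · rw [if_pos hpl, Finset.mem_singleton] at h
            exact (Fin.castSucc_lt_last u).ne h
          · rw [if_neg hpl] at h
            exact Finset.notMem_empty _ h
      · intro h
        exact Or.inl ⟨u, h, rfl⟩
    rw [hRHS]
    constructor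
    · intro h
      rw [mem_RmilSet]
      intro j' hj'
      have h2 := h _ (Fin.succAbove_lt_succAbove_iff.mpr hj')
      rw [hsa] at h2
      exact Fin.castSucc_lt_castSucc_iff.mp h2
    · intro h j hj
      rcases eq_or_ne j p with rfl | hne
      · rw [hp]
        exact Fin.castSucc_lt_last u
      · obtain ⟨j', rfl⟩ := Fin.exists_succAbove_eq hne
        rw [hsa]
        exact Fin.castSucc_lt_castSucc_iff.mpr
          (mem_RmilSet.mp h j' (Fin.succAbove_lt_succAbove_iff.mp hj))

/-! ### Cyc of the cycle-insertion -/

lemma cyc_orbit1 (σ : Equiv.Perm (Fin (n + 1))) (τ : Equiv.Perm (Fin n)) (p' : Fin n)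
    (hσp : σ (castSucc p') = last n) (hσL : σ (last n) = castSucc (τ p'))
    (hσcs : ∀ x : Fin n, x ≠ p' → σ (castSucc x) = castSucc (τ x))
    (j : Fin n) (m : ℕ) : ∃ k : ℕ, (σ ^ k) (castSucc j) = castSucc ((τ ^ m) j) := by
  induction m with
  | zero => exact ⟨0, by simp⟩
  | succ m ih =>
    obtain ⟨k, hk⟩ := ih
    by_cases hx : (τ ^ m) j = p'
    · refine ⟨k + 2, ?_⟩
      have e1 : (σ ^ (k + 2)) (castSucc j) = σ (σ ((σ ^ k) (castSucc j))) := by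
        rw [show k + 2 = (k + 1) + 1 by ring, pow_succ', Perm.mul_apply, pow_succ',
          Perm.mul_apply]
      rw [e1, hk, hx, hσp, hσL, ← hx, pow_succ', Perm.mul_apply]
    · refine ⟨k + 1, ?_⟩
      have e1 : (σ ^ (k + 1)) (castSucc j) = σ ((σ ^ k) (castSucc j)) := by
        rw [pow_succ', Perm.mul_apply]
      rw [e1, hk, hσcs _ hx, pow_succ', Perm.mul_apply]

lemma cyc_orbit2 (σ : Equiv.Perm (Fin (n + 1))) (τ : Equiv.Perm (Fin n)) (p' : Fin n)
    (hσp : σ (castSucc p') = last n) (hσL : σ (last n) = castSucc (τ p'))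
    (hσcs : ∀ x : Fin n, x ≠ p' → σ (castSucc x) = castSucc (τ x))
    (j : Fin n) (k : ℕ) :
    (∃ m, (σ ^ k) (castSucc j) = castSucc ((τ ^ m) j)) ∨
      ((σ ^ k) (castSucc j) = last n ∧ ∃ m, (τ ^ m) j = p') := by
  induction k with
  | zero => exact Or.inl ⟨0, by simp⟩
  | succ k ih =>
    have e1 : (σ ^ (k + 1)) (castSucc j) = σ ((σ ^ k) (castSucc j)) := by
      rw [pow_succ', Perm.mul_apply]
    rcases ih with ⟨m, hm⟩ | ⟨hL, m, hm⟩
    · by_cases hx : (τ ^ m) j = p'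
      · exact Or.inr ⟨by rw [e1, hm, hx, hσp], m, hx⟩
      · refine Or.inl ⟨m + 1, ?_⟩
        rw [e1, hm, hσcs _ hx, pow_succ', Perm.mul_apply]
    · refine Or.inl ⟨m + 1, ?_⟩
      rw [e1, hL, hσL, ← hm, pow_succ', Perm.mul_apply]

lemma cycSet_insC (p : Fin (n + 1)) (τ : Equiv.Perm (Fin n)) :
    CycSet (extP τ * Equiv.swap p (last n)) =
      (CycSet τ).image castSucc ∪ (if p = last n then {last n} else ∅) := by
  by_cases hpl : p = last n
  · subst hpl
    rw [Equiv.swap_self]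
    have h1 : extP τ * (Equiv.refl (Fin (n + 1)) : Equiv.Perm (Fin (n + 1))) = extP τ :=
      mul_one _
    rw [h1, if_pos rfl]
    ext i
    simp only [mem_CycSet, Finset.mem_union, Finset.mem_image, Finset.mem_singleton]
    cases i using Fin.lastCases with
    | last =>
      constructor
      · intro _; right; rfl
      · intro _ k
        rw [← extP_pow, extP_last]
    | cast j =>
      constructor
      · intro h
        left
        refine ⟨j, ?_, rfl⟩
        intro k
        have h2 := h k
        rw [← extP_pow, extP_castSucc] at h2
        exact Fin.castSucc_le_castSucc_iff.mp h2
      · intro h k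
        rcases h with ⟨j₀, hj₀, hje⟩ | h
        · have : j₀ = j := Fin.castSucc_injective n hje
          subst this
          rw [← extP_pow, extP_castSucc]
          exact Fin.castSucc_le_castSucc_iff.mpr (hj₀ k)
        · exact absurd h (Fin.castSucc_lt_last j).ne
  · have hpl' : p ≠ last n := hpl
    set p' := p.castPred hpl with hp'
    have hcsp : castSucc p' = p := Fin.castSucc_castPred p hpl
    set σ := extP τ * Equiv.swap p (last n) with hσ
    have hσp : σ (castSucc p') = last n := by
      rw [hσ, Perm.mul_apply, hcsp, Equiv.swap_apply_left, extP_last]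
    have hσL : σ (last n) = castSucc (τ p') := by
      rw [hσ, Perm.mul_apply, Equiv.swap_apply_right, ← hcsp, extP_castSucc]
    have hσcs : ∀ x : Fin n, x ≠ p' → σ (castSucc x) = castSucc (τ x) := by
      intro x hx
      have hxp : castSucc x ≠ p := by
        intro hc
        exact hx (Fin.castSucc_injective n (hc.trans hcsp.symm))
      rw [hσ, Perm.mul_apply,
        Equiv.swap_apply_of_ne_of_ne hxp (Fin.castSucc_lt_last x).ne, extP_castSucc]
    ext i
    simp only [mem_CycSet, Finset.mem_union, Finset.mem_image, if_neg hpl,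
      Finset.notMem_empty, or_false]
    cases i using Fin.lastCases with
    | last =>
      constructor
      · intro h
        exfalso
        have h2 := h 1
        rw [pow_one, hσL] at h2
        exact absurd h2 (not_le.mpr (Fin.castSucc_lt_last _))
      · rintro ⟨j₀, _, hje⟩
        exact absurd hje (Fin.castSucc_lt_last j₀).ne
    | cast j =>
      constructor
      · intro h
        refine ⟨j, ?_, rfl⟩
        intro m
        obtain ⟨k, hk⟩ := cyc_orbit1 σ τ p' hσp hσL hσcs j m
        have h2 := h k
        rw [hk] at h2
        exact Fin.castSucc_le_castSucc_iff.mp h2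
      · rintro ⟨j₀, hj₀, hje⟩
        have hj : j₀ = j := Fin.castSucc_injective n hje
        subst hj
        intro k
        rcases cyc_orbit2 σ τ p' hσp hσL hσcs j₀ k with ⟨m, hm⟩ | ⟨hL, _⟩
        · rw [hm]
          exact Fin.castSucc_le_castSucc_iff.mpr (hj₀ m)
        · rw [hL]
          exact Fin.le_last _

/-- Truncated Lmap. -/
def LmT (q : ℕ) (σ : Equiv.Perm (Fin n)) : Finset (Fin n) :=
  (LmapSet σ).filter (fun i => i.val < q)

/-! ### Counting machinery -/

lemma ncard_filter {α : Type*} [Fintype α] (P : α → Prop) [DecidablePred P] :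
    Nat.card {x // P x} = (Finset.univ.filter P).card := by
  rw [Nat.card_eq_fintype_card, Fintype.card_subtype]

lemma card_F {α β γ : Type*} [Fintype α] [Fintype β] [Fintype γ]
    (g₁ h₁ : α → β) (g₂ : α → γ)
    (H : ∀ b c, Nat.card {a // g₁ a = b ∧ g₂ a = c} = Nat.card {a // h₁ a = b ∧ g₂ a = c})
    (F : β → γ → Prop) :
    Nat.card {a // F (g₁ a) (g₂ a)} = Nat.card {a // F (h₁ a) (g₂ a)} := by
  rw [ncard_filter, ncard_filter]
  rw [Finset.card_eq_sum_card_fiberwise (f := fun a => (g₁ a, g₂ a))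
    (t := Finset.univ.filter fun bc => F bc.1 bc.2)
    (fun a ha => by
      simp only [Finset.mem_coe, Finset.mem_filter, Finset.mem_univ, true_and] at ha ⊢
      exact ha)]
  rw [Finset.card_eq_sum_card_fiberwise (f := fun a => (h₁ a, g₂ a))
    (t := Finset.univ.filter fun bc => F bc.1 bc.2)
    (fun a ha => by
      simp only [Finset.mem_coe, Finset.mem_filter, Finset.mem_univ, true_and] at ha ⊢
      exact ha)]
  apply Finset.sum_congr rfl
  intro bc hbc
  have hFbc : F bc.1 bc.2 := (Finset.mem_filter.mp hbc).2
  show ((Finset.univ.filter fun a => F (g₁ a) (g₂ a)).filter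
      (fun a => (g₁ a, g₂ a) = bc)).card =
    ((Finset.univ.filter fun a => F (h₁ a) (g₂ a)).filter
      (fun a => (h₁ a, g₂ a) = bc)).card
  have e1 : ((Finset.univ.filter fun a => F (g₁ a) (g₂ a)).filter
      (fun a => (g₁ a, g₂ a) = bc)) = Finset.univ.filter (fun a => g₁ a = bc.1 ∧ g₂ a = bc.2) := by
    ext a
    simp only [Finset.mem_filter, Finset.mem_univ, true_and, Prod.ext_iff]
    constructor
    · rintro ⟨_, h⟩; exact h
    · intro h
      refine ⟨?_, h⟩
      rw [h.1, h.2]; exact hFbc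
  have e2 : ((Finset.univ.filter fun a => F (h₁ a) (g₂ a)).filter
      (fun a => (h₁ a, g₂ a) = bc)) = Finset.univ.filter (fun a => h₁ a = bc.1 ∧ g₂ a = bc.2) := by
    ext a
    simp only [Finset.mem_filter, Finset.mem_univ, true_and, Prod.ext_iff]
    constructor
    · rintro ⟨_, h⟩; exact h
    · intro h
      refine ⟨?_, h⟩
      rw [h.1, h.2]; exact hFbc
  rw [e1, e2]
  have hH := H bc.1 bc.2
  rwa [ncard_filter, ncard_filter] at hH

lemma ncard_prod_sum {α β : Type*} [Fintype α] [Fintype β] (P : α × β → Prop) :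
    Nat.card {x : α × β // P x} = ∑ a : α, Nat.card {b // P (a, b)} := by
  rw [Nat.card_congr (Equiv.subtypeProdEquivSigmaSubtype (fun a b => P (a, b))),
    Nat.card_eq_fintype_card, Fintype.card_sigma]
  simp [Nat.card_eq_fintype_card]

/-! ### The main induction -/

set_option maxHeartbeats 400000 in
lemma main : ∀ (n q : ℕ) (S T : Finset (Fin n)),
    Nat.card {σ : Equiv.Perm (Fin n) // CycSet σ = S ∧ LmT q σ = T} =
    Nat.card {σ : Equiv.Perm (Fin n) // RmilSet σ = S ∧ LmT q σ = T} := by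
  intro n
  induction n with
  | zero =>
    intro q S T
    apply Nat.card_congr
    apply Equiv.subtypeEquivRight
    intro σ
    have he : ∀ A B : Finset (Fin 0), A = B := by
      intro A B
      ext i
      exact i.elim0
    constructor <;> intro _ <;> exact ⟨he _ _, he _ _⟩
  | succ n IH =>
    intro q S T
    have hζC : ∀ p : Fin (n + 1), Equiv.swap p (last n) p = last n :=
      fun p => Equiv.swap_apply_left p (last n)
    have hζR : ∀ p : Fin (n + 1), rho p p = last n := rho_self
    have decC : Nat.card {σ : Equiv.Perm (Fin (n + 1)) //
          CycSet σ = S ∧ LmT q σ = T} =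
        ∑ p : Fin (n + 1), Nat.card {τ : Equiv.Perm (Fin n) //
          CycSet (insEquiv (fun p => Equiv.swap p (last n)) hζC (p, τ)) = S ∧
          LmT q (insEquiv (fun p => Equiv.swap p (last n)) hζC (p, τ)) = T} := by
      have e1 : Nat.card {σ : Equiv.Perm (Fin (n + 1)) //
            CycSet σ = S ∧ LmT q σ = T} =
          Nat.card {pt : Fin (n + 1) × Equiv.Perm (Fin n) //
            CycSet (insEquiv (fun p => Equiv.swap p (last n)) hζC pt) = S ∧
            LmT q (insEquiv (fun p => Equiv.swap p (last n)) hζC pt) = T} :=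
        (Nat.card_congr (Equiv.subtypeEquiv (insEquiv (fun p => Equiv.swap p (last n)) hζC) (fun pt => Iff.rfl))).symm
      rw [e1]
      exact ncard_prod_sum _
    have decR : Nat.card {σ : Equiv.Perm (Fin (n + 1)) //
          RmilSet σ = S ∧ LmT q σ = T} =
        ∑ p : Fin (n + 1), Nat.card {τ : Equiv.Perm (Fin n) //
          RmilSet (insEquiv (fun p => rho p) hζR (p, τ)) = S ∧
          LmT q (insEquiv (fun p => rho p) hζR (p, τ)) = T} := by
      have e1 : Nat.card {σ : Equiv.Perm (Fin (n + 1)) //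
            RmilSet σ = S ∧ LmT q σ = T} =
          Nat.card {pt : Fin (n + 1) × Equiv.Perm (Fin n) //
            RmilSet (insEquiv (fun p => rho p) hζR pt) = S ∧
            LmT q (insEquiv (fun p => rho p) hζR pt) = T} :=
        (Nat.card_congr (Equiv.subtypeEquiv (insEquiv (fun p => rho p) hζR) (fun pt => Iff.rfl))).symm
      rw [e1]
      exact ncard_prod_sum _
    rw [decC, decR]
    apply Finset.sum_congr rfl
    intro p _
    have lmapC : ∀ τ : Equiv.Perm (Fin n),
        LmapSet (insEquiv (fun p => Equiv.swap p (last n)) hζC (p, τ)) =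
          ((LmapSet τ).filter (fun j => castSucc j < p)).image castSucc ∪ {p} := by
      intro τ
      apply lmapSet_insert _ _ τ
      · rw [insEquiv_apply, Perm.mul_apply, Equiv.swap_apply_left, extP_last]
      · intro j hj
        rw [insEquiv_apply, Perm.mul_apply,
          Equiv.swap_apply_of_ne_of_ne (ne_of_lt hj) (Fin.castSucc_lt_last j).ne, extP_castSucc]
    have lmapR : ∀ τ : Equiv.Perm (Fin n),
        LmapSet (insEquiv (fun p => rho p) hζR (p, τ)) =
          ((LmapSet τ).filter (fun j => castSucc j < p)).image castSucc ∪ {p} := by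
      intro τ
      apply lmapSet_insert _ _ τ
      · rw [insEquiv_apply, Perm.mul_apply, rho_self, extP_last]
      · intro j hj
        rw [insEquiv_apply, Perm.mul_apply, ← Fin.succAbove_of_castSucc_lt p j hj,
          rho_succAbove, extP_castSucc]
    have lmfilter : ∀ σ : Equiv.Perm (Fin (n + 1)), ∀ τ : Equiv.Perm (Fin n),
        LmapSet σ = (((LmapSet τ).filter (fun j => castSucc j < p)).image castSucc ∪ {p}) →
        LmT q σ = (LmT (min p.val q) τ).image castSucc ∪
            (if p.val < q then {p} else ∅) := by
      intro σ τ hX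
      show (LmapSet σ).filter (fun i => i.val < q) =
        ((LmapSet τ).filter (fun i => i.val < min p.val q)).image castSucc ∪
          (if p.val < q then {p} else ∅)
      rw [hX, Finset.filter_union, Finset.filter_image, Finset.filter_filter,
        Finset.filter_singleton]
      congr 1
      congr 1
      apply Finset.filter_congr
      intro j _
      simp [Fin.lt_def, Nat.lt_min]
    have keyC : ∀ τ : Equiv.Perm (Fin n),
        (CycSet (insEquiv (fun p => Equiv.swap p (last n)) hζC (p, τ)) = S ∧
          LmT q (insEquiv (fun p => Equiv.swap p (last n)) hζC (p, τ)) = T) ↔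
        ((CycSet τ).image castSucc ∪ (if p = last n then {last n} else ∅) = S ∧
          (LmT (min p.val q) τ).image castSucc ∪
            (if p.val < q then {p} else ∅) = T) := by
      intro τ
      rw [lmfilter _ _ (lmapC τ), insEquiv_apply, cycSet_insC]
    have keyR : ∀ τ : Equiv.Perm (Fin n),
        (RmilSet (insEquiv (fun p => rho p) hζR (p, τ)) = S ∧
          LmT q (insEquiv (fun p => rho p) hζR (p, τ)) = T) ↔
        ((RmilSet τ).image castSucc ∪ (if p = last n then {last n} else ∅) = S ∧
          (LmT (min p.val q) τ).image castSucc ∪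
            (if p.val < q then {p} else ∅) = T) := by
      intro τ
      rw [lmfilter _ _ (lmapR τ), insEquiv_apply, rmilSet_insR]
    have hmid : Nat.card {τ : Equiv.Perm (Fin n) //
          (CycSet τ).image castSucc ∪ (if p = last n then {last n} else ∅) = S ∧
          (LmT (min p.val q) τ).image castSucc ∪
            (if p.val < q then {p} else ∅) = T} =
        Nat.card {τ : Equiv.Perm (Fin n) //
          (RmilSet τ).image castSucc ∪ (if p = last n then {last n} else ∅) = S ∧
          (LmT (min p.val q) τ).image castSucc ∪
            (if p.val < q then {p} else ∅) = T} :=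
      card_F CycSet RmilSet (LmT (min p.val q))
        (fun b c => IH (min p.val q) b c)
        (fun A B => A.image castSucc ∪ (if p = last n then {last n} else ∅) = S ∧
          B.image castSucc ∪ (if p.val < q then {p} else ∅) = T)
    exact (Nat.card_congr (Equiv.subtypeEquivRight keyC)).trans
      (hmid.trans (Nat.card_congr (Equiv.subtypeEquivRight keyR)).symm)

lemma main' (n : ℕ) (S T : Finset (Fin n)) :
    Nat.card {σ : Equiv.Perm (Fin n) // CycSet σ = S ∧ LmapSet σ = T} =
    Nat.card {σ : Equiv.Perm (Fin n) // RmilSet σ = S ∧ LmapSet σ = T} := by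
  have h := main n n S T
  have he : ∀ σ : Equiv.Perm (Fin n), LmT n σ = LmapSet σ := by
    intro σ
    exact Finset.filter_true_of_mem (fun i _ => i.isLt)
  simp only [he] at h
  exact h

end

end FH

/-- Foata–Han.  The pairs of set-valued statistics
`(Cyc, Rmil)`, `(Cyc, Lmap)`, `(Rmil, Lmap)` are jointly equidistributed and
each is symmetric. -/
theorem cyc_rmil_lmap_pairs_equidistributed (n : ℕ) (S T : Finset (Fin n)) :
    (Nat.card {σ : Equiv.Perm (Fin n) // SortIdx.CycSet σ = S ∧ SortIdx.RmilSet σ = T} =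
      Nat.card {σ : Equiv.Perm (Fin n) // SortIdx.CycSet σ = S ∧ SortIdx.LmapSet σ = T}) ∧
    (Nat.card {σ : Equiv.Perm (Fin n) // SortIdx.CycSet σ = S ∧ SortIdx.LmapSet σ = T} =
      Nat.card {σ : Equiv.Perm (Fin n) // SortIdx.RmilSet σ = S ∧ SortIdx.LmapSet σ = T}) ∧
    (Nat.card {σ : Equiv.Perm (Fin n) // SortIdx.CycSet σ = S ∧ SortIdx.RmilSet σ = T} =
      Nat.card {σ : Equiv.Perm (Fin n) // SortIdx.CycSet σ = T ∧ SortIdx.RmilSet σ = S}) ∧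
    (Nat.card {σ : Equiv.Perm (Fin n) // SortIdx.CycSet σ = S ∧ SortIdx.LmapSet σ = T} =
      Nat.card {σ : Equiv.Perm (Fin n) // SortIdx.CycSet σ = T ∧ SortIdx.LmapSet σ = S}) ∧
    (Nat.card {σ : Equiv.Perm (Fin n) // SortIdx.RmilSet σ = S ∧ SortIdx.LmapSet σ = T} =
      Nat.card {σ : Equiv.Perm (Fin n) // SortIdx.RmilSet σ = T ∧ SortIdx.LmapSet σ = S}) := by
  have inv1 : ∀ S T : Finset (Fin n),
      Nat.card {σ : Equiv.Perm (Fin n) // SortIdx.CycSet σ = S ∧ SortIdx.RmilSet σ = T} =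
      Nat.card {σ : Equiv.Perm (Fin n) // SortIdx.CycSet σ = S ∧ SortIdx.LmapSet σ = T} := by
    intro S T
    apply Nat.card_congr
    refine Equiv.subtypeEquiv (Equiv.inv (Equiv.Perm (Fin n))) (fun σ => ?_)
    simp only [Equiv.inv_apply]
    rw [FH.cycSet_inv, FH.lmapSet_inv]
  have inv5 : ∀ S T : Finset (Fin n),
      Nat.card {σ : Equiv.Perm (Fin n) // SortIdx.RmilSet σ = S ∧ SortIdx.LmapSet σ = T} =
      Nat.card {σ : Equiv.Perm (Fin n) // SortIdx.RmilSet σ = T ∧ SortIdx.LmapSet σ = S} := by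
    intro S T
    apply Nat.card_congr
    refine Equiv.subtypeEquiv (Equiv.inv (Equiv.Perm (Fin n))) (fun σ => ?_)
    simp only [Equiv.inv_apply]
    rw [FH.rmilSet_inv, FH.lmapSet_inv]
    exact and_comm
  have e4 : Nat.card {σ : Equiv.Perm (Fin n) // SortIdx.CycSet σ = S ∧ SortIdx.LmapSet σ = T} =
      Nat.card {σ : Equiv.Perm (Fin n) // SortIdx.CycSet σ = T ∧ SortIdx.LmapSet σ = S} := by
    rw [FH.main' n S T, FH.main' n T S, inv5 S T]
  have e3 : Nat.card {σ : Equiv.Perm (Fin n) // SortIdx.CycSet σ = S ∧ SortIdx.RmilSet σ = T} =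
      Nat.card {σ : Equiv.Perm (Fin n) // SortIdx.CycSet σ = T ∧ SortIdx.RmilSet σ = S} := by
    rw [inv1 S T, inv1 T S, e4]
  exact ⟨inv1 S T, FH.main' n S T, e3, e4, inv5 S T⟩
end
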